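/- arXiv:1209.4865 — 2 statements merged into one kernel-verified Lean document; each statement's English description precedes it below -/
import Mathlib

section
/- Let k be a constant and let (F_n) be a family of {*}-formulas over a field K whose sizes are bounded by a polynomial in n and whose maximal dimension is at most k, such that the tensor computed by each F_n has a single entry, the polynomial f_n. Then the family (f_n) is in VP. -/
namespace TC

/-- An entry of an input tensor: an element of `K` or a variable. -/
inductive Entry (K : Type) where
  | const : K → Entry K
  | var : ℕ → Entry K

noncomputable def Entry.toPoly {K : Type} [CommSemiring K] : Entry K → MvPolynomial ℕ K
  | .const c => MvPolynomial.C c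
  | .var n => MvPolynomial.X n

/-- The index set of a tensor of order `ns`. -/
def Idx : List ℕ → Type
  | [] => PUnit
  | n :: ns => Fin n × Idx ns

def Idx.cast {xs ys : List ℕ} (h : xs = ys) (e : Idx xs) : Idx ys := h ▸ e

def Idx.app : (xs : List ℕ) → {ys : List ℕ} → Idx xs → Idx ys → Idx (xs ++ ys)
  | [], _, _, f => f
  | _ :: xs, _, e, f => (e.1, Idx.app xs e.2 f)

def Idx.split : (xs : List ℕ) → {ys : List ℕ} → Idx (xs ++ ys) → Idx xs × Idx ys
  | [], _, e => (PUnit.unit, e)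
  | _ :: xs, _, e => ((e.1, (Idx.split xs e.2).1), (Idx.split xs e.2).2)

/-- A tensor over `R`: an order `(n_1, …, n_k)` together with an entry map. -/
structure Tens (R : Type) where
  order : List ℕ
  entry : Idx order → R

/-- Number of entries of a tensor. -/
def Tens.tsize {R} (T : Tens R) : ℕ := T.order.prod

/-- Dimension of a tensor. -/
def Tens.dim {R} (T : Tens R) : ℕ := T.order.length

/-- Maximal order of a tensor. -/
def Tens.maxOrder {R} (T : Tens R) : ℕ := T.order.foldr max 0

/-- `T` and `G` can be contracted: last order of `T` equals first order of `G`. -/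
def Tens.Compatible {R} (T G : Tens R) : Prop :=
  T.order ≠ [] ∧ G.order ≠ [] ∧ T.order.getLast? = G.order.head?

/-- Contraction `T * G` on the last dimension of `T` and the first dimension of `G`
(returning a junk scalar tensor when the orders are incompatible). -/
def Tens.contr {R : Type} [CommSemiring R] (T G : Tens R) : Tens R :=
  match hT : T.order.getLast?, hG : G.order with
  | some c, c' :: ms =>
      if hc : c' = c then
        { order := T.order.dropLast ++ ms
          entry := fun e =>
            let p := Idx.split T.order.dropLast e
            ∑ i : Fin c,
              T.entry (Idx.cast
                (show T.order.dropLast ++ [c] = T.order by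
                  have hne : T.order ≠ [] := by
                    intro h; rw [h] at hT; simp at hT
                  have : T.order.getLast hne = c := by
                    have := List.getLast?_eq_some_getLast hne
                    rw [this] at hT
                    exact (Option.some.injEq _ _).mp hT
                  rw [← this]
                  exact List.dropLast_append_getLast hne)
                (Idx.app T.order.dropLast p.1 ((i, PUnit.unit) : Idx [c]))) *
              G.entry (Idx.cast
                (show c :: ms = G.order by rw [hG, hc])
                ((i, p.2) : Idx (c :: ms))) }
      else ⟨[], fun _ => 0⟩
  | _, _ => ⟨[], fun _ => 0⟩

end TC

namespace TC

/-- Insert a coordinate value at position `i`, recovering an index for order `l`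
from an index for `l.eraseIdx i`. -/
def Idx.insertAt : (l : List ℕ) → (i : Fin l.length) → Fin (l.get i) →
    Idx (l.eraseIdx i.val) → Idx l
  | _ :: _, ⟨0, _⟩, r, e => (r, e)
  | _ :: l, ⟨i + 1, h⟩, r, e =>
      (e.1, Idx.insertAt l ⟨i, by simpa using Nat.lt_of_succ_lt_succ h⟩ r e.2)

/-- The contraction `T *_{i,j} G` on dimension `i` of `T` and dimension `j` of `G`
(0-based; returns a junk scalar tensor when incompatible). -/
noncomputable def Tens.contrIJ {R : Type} [CommSemiring R] (T G : Tens R) (i j : ℕ) : Tens R :=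
  if h : ∃ (hi : i < T.order.length) (hj : j < G.order.length),
      T.order.get ⟨i, hi⟩ = G.order.get ⟨j, hj⟩ then
    { order := T.order.eraseIdx i ++ G.order.eraseIdx j
      entry := fun e =>
        let hi := h.choose
        let hj := h.choose_spec.choose
        let hc := h.choose_spec.choose_spec
        let p := Idx.split (T.order.eraseIdx i) e
        ∑ r : Fin (T.order.get ⟨i, hi⟩),
          T.entry (Idx.insertAt T.order ⟨i, hi⟩ r p.1) *
          G.entry (Idx.insertAt G.order ⟨j, hj⟩ (Fin.cast hc r) p.2) }
  else ⟨[], fun _ => 0⟩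

/-- `{*}`-formulas: leaves are input tensors with entries in `K` or variables,
internal nodes are contractions `*`. -/
inductive SForm (K : Type) where
  | input : Tens (Entry K) → SForm K
  | contr : SForm K → SForm K → SForm K

variable {K : Type} [Field K]

/-- The tensor computed by a `{*}`-formula. -/
noncomputable def SForm.eval : SForm K → Tens (MvPolynomial ℕ K)
  | .input T => ⟨T.order, fun e => (T.entry e).toPoly⟩
  | .contr F G => (F.eval).contr G.eval

/-- Well-formedness: at every `*`-node the orders match. -/
def SForm.WF : SForm K → Prop
  | .input _ => True
  | .contr F G => F.WF ∧ G.WF ∧ F.eval.Compatible G.eval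

/-- Size of a `{*}`-formula: number of `*`-nodes plus sizes of the input tensors. -/
def SForm.size : SForm K → ℕ
  | .input T => T.tsize
  | .contr F G => F.size + G.size + 1

/-- Dimension of the tensor computed by the formula. -/
noncomputable def SForm.dim (F : SForm K) : ℕ := F.eval.dim

/-- Maximal dimension over all nodes of the formula. -/
noncomputable def SForm.maxdim : SForm K → ℕ
  | .input T => T.dim
  | .contr F G => max ((F.eval.contr G.eval).dim) (max F.maxdim G.maxdim)

/-- Input dimension: maximal dimension of an input tensor. -/
def SForm.inputDim : SForm K → ℕ
  | .input T => T.dim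
  | .contr F G => max F.inputDim G.inputDim

/-- Maximum of the maximal orders of the input tensors. -/
def SForm.inputMaxOrder : SForm K → ℕ
  | .input T => T.maxOrder
  | .contr F G => max F.inputMaxOrder G.inputMaxOrder

/-- All input tensors have dimension at least 2. -/
def SForm.InputsDimGE2 : SForm K → Prop
  | .input T => 2 ≤ T.dim
  | .contr F G => F.InputsDimGE2 ∧ G.InputsDimGE2

/-- A formula of dimension `k` and input dimension `p` is tame if
`maxdim ≤ max k p`. -/
noncomputable def SForm.Tame (F : SForm K) : Prop := F.maxdim ≤ max F.dim F.inputDim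

/-- Every subformula is tame. -/
noncomputable def SForm.TotallyTame : SForm K → Prop
  | .input T => (SForm.input T : SForm K).Tame
  | .contr F G => (SForm.contr F G).Tame ∧ F.TotallyTame ∧ G.TotallyTame

/-- The tensor computed by `F` has a single entry, equal to the polynomial `f`. -/
noncomputable def SForm.ComputesPoly (F : SForm K) (f : MvPolynomial ℕ K) : Prop :=
  F.eval.tsize = 1 ∧ ∀ e, F.eval.entry e = f

/-- `{*_{i,j}}`-formulas: internal nodes carry the pair of contracted dimensions
(0-based). -/
inductive IForm (K : Type) where
  | input : Tens (Entry K) → IForm K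
  | contr : ℕ → ℕ → IForm K → IForm K → IForm K

noncomputable def IForm.eval : IForm K → Tens (MvPolynomial ℕ K)
  | .input T => ⟨T.order, fun e => (T.entry e).toPoly⟩
  | .contr i j F G => (F.eval).contrIJ G.eval i j

def IForm.WF : IForm K → Prop
  | .input _ => True
  | .contr i j F G => F.WF ∧ G.WF ∧
      ∃ (hi : i < F.eval.order.length) (hj : j < G.eval.order.length),
        F.eval.order.get ⟨i, hi⟩ = G.eval.order.get ⟨j, hj⟩

def IForm.size : IForm K → ℕ
  | .input T => T.tsize
  | .contr _ _ F G => F.size + G.size + 1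

noncomputable def IForm.dim (F : IForm K) : ℕ := F.eval.dim

noncomputable def IForm.maxdim : IForm K → ℕ
  | .input T => T.dim
  | .contr i j F G => max ((F.eval.contrIJ G.eval i j).dim) (max F.maxdim G.maxdim)

def IForm.inputDim : IForm K → ℕ
  | .input T => T.dim
  | .contr _ _ F G => max F.inputDim G.inputDim

noncomputable def IForm.Tame (F : IForm K) : Prop := F.maxdim ≤ max F.dim F.inputDim

noncomputable def IForm.TotallyTame : IForm K → Prop
  | .input T => (IForm.input T : IForm K).Tame
  | .contr i j F G => (IForm.contr i j F G).Tame ∧ F.TotallyTame ∧ G.TotallyTame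

noncomputable def IForm.ComputesPoly (F : IForm K) (f : MvPolynomial ℕ K) : Prop :=
  F.eval.tsize = 1 ∧ ∀ e, F.eval.entry e = f

end TC

namespace TC

/-- A gate of an arithmetic circuit: an input (constant or variable) or a
computation gate with the indices of its two children. -/
inductive Gate (K : Type) where
  | const : K → Gate K
  | var : ℕ → Gate K
  | add : ℕ → ℕ → Gate K
  | mul : ℕ → ℕ → Gate K

def Gate.children {K} : Gate K → List ℕ
  | .add j k => [j, k]
  | .mul j k => [j, k]
  | _ => []

def Gate.IsInput {K} : Gate K → Prop
  | .const _ => True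
  | .var _ => True
  | _ => False

/-- An arithmetic circuit: a DAG of gates (children point to smaller indices,
which is equivalent to acyclicity) with a distinguished output gate. -/
structure Circuit (K : Type) where
  size : ℕ
  gate : Fin size → Gate K
  output : Fin size
  wf : ∀ i : Fin size, ∀ j ∈ (gate i).children, j < i.val

/-- The polynomial computed by a gate of the circuit. -/
noncomputable def Circuit.eval {K : Type} [Field K] (C : Circuit K) :
    Fin C.size → MvPolynomial ℕ K
  | i =>
    match h : C.gate i with
    | .const c => MvPolynomial.C c
    | .var n => MvPolynomial.X n
    | .add j k =>
        have hj : j < i.val := C.wf i j (by rw [h]; simp [Gate.children])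
        have hk : k < i.val := C.wf i k (by rw [h]; simp [Gate.children])
        C.eval ⟨j, hj.trans i.isLt⟩ + C.eval ⟨k, hk.trans i.isLt⟩
    | .mul j k =>
        have hj : j < i.val := C.wf i j (by rw [h]; simp [Gate.children])
        have hk : k < i.val := C.wf i k (by rw [h]; simp [Gate.children])
        C.eval ⟨j, hj.trans i.isLt⟩ * C.eval ⟨k, hk.trans i.isLt⟩
  termination_by i => i.val

/-- The circuit computes `f` if its output gate computes `f`. -/
noncomputable def Circuit.Computes {K : Type} [Field K] (C : Circuit K)
    (f : MvPolynomial ℕ K) : Prop :=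
  C.eval C.output = f

/-- `a` is a child of `b`. -/
def Circuit.Child {K} (C : Circuit K) (a b : Fin C.size) : Prop :=
  a.val ∈ (C.gate b).children

/-- The set of gates of the subcircuit rooted at `i`. -/
def Circuit.Subgates {K} (C : Circuit K) (i : Fin C.size) : Set (Fin C.size) :=
  {j | Relation.ReflTransGen C.Child j i}

/-- Multiplicatively disjoint: the subcircuits rooted at the two children of any
`×`-gate are disjoint. -/
def Circuit.MultDisjoint {K} (C : Circuit K) : Prop :=
  ∀ i : Fin C.size, ∀ j k : ℕ, C.gate i = .mul j k →
    ∀ (hj : j < C.size) (hk : k < C.size),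
      Disjoint (C.Subgates ⟨j, hj⟩) (C.Subgates ⟨k, hk⟩)

/-- Skew: every `×`-gate has at least one child which is an input gate. -/
def Circuit.Skew {K} (C : Circuit K) : Prop :=
  ∀ i : Fin C.size, ∀ j k : ℕ, C.gate i = .mul j k →
    ∀ (hj : j < C.size) (hk : k < C.size),
      (C.gate ⟨j, hj⟩).IsInput ∨ (C.gate ⟨k, hk⟩).IsInput

/-- The class VP: families of polynomials computed by polynomial-size
multiplicatively disjoint circuits. -/
noncomputable def VP {K : Type} [Field K] (f : ℕ → MvPolynomial ℕ K) : Prop :=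
  ∃ (C : ℕ → Circuit K) (P : Polynomial ℕ),
    ∀ n, (C n).MultDisjoint ∧ (C n).Computes (f n) ∧ (C n).size ≤ P.eval n

/-- Parse trees, recording at each node the index of the corresponding gate. -/
inductive ParseT where
  | leaf : ℕ → ParseT
  | plus : ℕ → ParseT → ParseT
  | times : ℕ → ParseT → ParseT → ParseT

/-- Ordered rooted trees (shapes of parse trees); two parse trees are isomorphic
as ordered rooted trees iff they have the same shape. -/
inductive Shape where
  | lf : Shape
  | un : Shape → Shape
  | bin : Shape → Shape → Shape

def ParseT.shape : ParseT → Shape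
  | .leaf _ => .lf
  | .plus _ t => .un t.shape
  | .times _ l r => .bin l.shape r.shape

/-- Number of vertices of a tree. -/
def Shape.size : Shape → ℕ
  | .lf => 1
  | .un t => t.size + 1
  | .bin l r => l.size + r.size + 1

/-- `C.ParseFrom i t`: `t` is a parse tree of the subcircuit of `C` rooted at gate `i`. -/
inductive Circuit.ParseFrom {K} (C : Circuit K) : Fin C.size → ParseT → Prop where
  | leaf (i : Fin C.size) (h : (C.gate i).IsInput) : C.ParseFrom i (.leaf i.val)
  | plusL (i : Fin C.size) (j k : ℕ) (h : C.gate i = .add j k) (hj : j < C.size)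
      (t : ParseT) (ht : C.ParseFrom ⟨j, hj⟩ t) : C.ParseFrom i (.plus i.val t)
  | plusR (i : Fin C.size) (j k : ℕ) (h : C.gate i = .add j k) (hk : k < C.size)
      (t : ParseT) (ht : C.ParseFrom ⟨k, hk⟩ t) : C.ParseFrom i (.plus i.val t)
  | times (i : Fin C.size) (j k : ℕ) (h : C.gate i = .mul j k)
      (hj : j < C.size) (hk : k < C.size) (tl tr : ParseT)
      (hl : C.ParseFrom ⟨j, hj⟩ tl) (hr : C.ParseFrom ⟨k, hk⟩ tr) :
      C.ParseFrom i (.times i.val tl tr)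

/-- `t` is a parse tree of the circuit `C`. -/
def Circuit.IsParseTree {K} (C : Circuit K) (t : ParseT) : Prop :=
  C.ParseFrom C.output t


section Aux
lemma Idx.elim_zero : ∀ {l : List ℕ}, 0 ∈ l → Idx l → False
  | n :: ns, h, e => by
    rcases List.mem_cons.mp h with h | h
    · exact absurd e.1.isLt (by omega)
    · exact Idx.elim_zero h e.2

def idxFintype : (l : List ℕ) → Fintype (Idx l)
  | [] => inferInstanceAs (Fintype PUnit)
  | n :: ns => @instFintypeProd _ _ _ (idxFintype ns)

attribute [local instance] idxFintype

lemma card_idx : ∀ l : List ℕ, Fintype.card (Idx l) = l.prod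
  | [] => rfl
  | n :: ns => by
    show Fintype.card (Fin n × Idx ns) = _
    rw [Fintype.card_prod, Fintype.card_fin, card_idx ns, List.prod_cons]

lemma idx_nonempty : ∀ {l : List ℕ}, (∀ x ∈ l, 0 < x) → Nonempty (Idx l)
  | [], _ => ⟨PUnit.unit⟩
  | n :: ns, h => by
    obtain ⟨e⟩ := idx_nonempty (fun x hx => h x (List.mem_cons_of_mem _ hx))
    exact ⟨⟨⟨0, h n (List.mem_cons_self)⟩, e⟩⟩

lemma le_foldr_max {l : List ℕ} {x : ℕ} (h : x ∈ l) : x ≤ l.foldr max 0 := by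
  induction l with
  | nil => simp at h
  | cons a t ih =>
    rcases List.mem_cons.mp h with rfl | h
    · exact le_max_left _ _
    · exact le_trans (ih h) (le_max_right _ _)

lemma foldr_max_le_prod {l : List ℕ} (h : ∀ x ∈ l, 0 < x) : l.foldr max 0 ≤ l.prod := by
  induction l with
  | nil => simp
  | cons a t ih =>
    have ha : 0 < a := h a (List.mem_cons_self)
    have ht : ∀ x ∈ t, 0 < x := fun x hx => h x (List.mem_cons_of_mem _ hx)
    have hpt : 0 < t.prod := List.prod_pos ht
    simp only [List.foldr_cons, List.prod_cons]
    exact max_le (Nat.le_mul_of_pos_right a hpt)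
      (le_trans (ih ht) (Nat.le_mul_of_pos_left _ ha))

lemma prod_le_pow {l : List ℕ} {m k : ℕ} (h : ∀ x ∈ l, x ≤ m) (hk : l.length ≤ k) :
    l.prod ≤ (m + 1) ^ k := by
  have base : ∀ l : List ℕ, (∀ x ∈ l, x ≤ m) → l.prod ≤ (m+1) ^ l.length := by
    intro l
    induction l with
    | nil => simp
    | cons a t ih =>
      intro h
      simp only [List.prod_cons, List.length_cons, pow_succ']
      exact Nat.mul_le_mul
        (le_trans (h a (List.mem_cons_self)) (Nat.le_succ m))
        (ih (fun x hx => h x (List.mem_cons_of_mem _ hx)))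
  exact le_trans (base l h) (Nat.pow_le_pow_right (Nat.succ_pos m) hk)

lemma prod_eq_one_pos {l : List ℕ} (h : l.prod = 1) : ∀ x ∈ l, 0 < x := by
  intro x hx
  rcases Nat.eq_zero_or_pos x with rfl | h'
  · exact absurd (List.prod_eq_zero hx) (by omega)
  · exact h'

lemma Tens.contr_spec {R : Type} [CommSemiring R] (T G : Tens R) (h : T.Compatible G) :
    ∃ (c : ℕ) (ms : List ℕ) (hG : G.order = c :: ms)
      (hT : T.order.dropLast ++ [c] = T.order),
      T.contr G = ⟨T.order.dropLast ++ ms, fun e =>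
        ∑ i : Fin c,
          T.entry (Idx.cast hT
            (Idx.app T.order.dropLast (Idx.split T.order.dropLast e).1
              ((i, PUnit.unit) : Idx [c]))) *
          G.entry (Idx.cast hG.symm
            ((i, (Idx.split T.order.dropLast e).2) : Idx (c :: ms)))⟩ := by
  obtain ⟨hTne, hGne, hco⟩ := h
  obtain ⟨c, ms, hG⟩ : ∃ c ms, G.order = c :: ms := by
    cases hGo : G.order with
    | nil => exact absurd hGo hGne
    | cons a l => exact ⟨a, l, rfl⟩
  have hlast : T.order.getLast? = some c := by rw [hco, hG]; rfl
  have hTlast : T.order.getLast hTne = c := by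
    have := List.getLast?_eq_some_getLast hTne
    rw [this] at hlast
    exact (Option.some.injEq _ _).mp hlast
  have hT : T.order.dropLast ++ [c] = T.order := by
    rw [← hTlast]; exact List.dropLast_append_getLast hTne
  refine ⟨c, ms, hG, hT, ?_⟩
  unfold Tens.contr
  split
  · rename_i c2 c2' ms2 hT2 hG2
    rw [hlast] at hT2
    obtain rfl : c2 = c := ((Option.some.injEq _ _).mp hT2).symm
    rw [hG2] at hG
    obtain ⟨rfl, rfl⟩ : c2' = c2 ∧ ms2 = ms :=
      ⟨((List.cons.injEq _ _ _ _).mp hG).1, ((List.cons.injEq _ _ _ _).mp hG).2⟩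
    rw [dif_pos rfl]
  · rename_i hbad
    exact absurd (hbad c c ms hlast hG) id


variable {K : Type} [Field K]

lemma Circuit.size_pos (C : Circuit K) : 0 < C.size := C.output.pos

omit [Field K] in
lemma Circuit.child_lt {C : Circuit K} {a b : Fin C.size} (h : C.Child a b) :
    a.val < b.val := C.wf b a.val h

omit [Field K] in
lemma Circuit.reach_le {C : Circuit K} {a b : Fin C.size}
    (h : Relation.ReflTransGen C.Child a b) : a.val ≤ b.val := by
  induction h with
  | refl => exact le_refl _
  | tail _ hc ih => exact le_trans ih (le_of_lt (Circuit.child_lt hc))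

lemma Circuit.eval_const {C : Circuit K} {i : Fin C.size} {c : K}
    (h : C.gate i = .const c) : C.eval i = MvPolynomial.C c := by
  rw [Circuit.eval]; split <;> simp_all

lemma Circuit.eval_var {C : Circuit K} {i : Fin C.size} {n : ℕ}
    (h : C.gate i = .var n) : C.eval i = MvPolynomial.X n := by
  rw [Circuit.eval]; split <;> simp_all

lemma Circuit.eval_add {C : Circuit K} {i : Fin C.size} {j k : ℕ}
    (h : C.gate i = .add j k) (hj : j < C.size) (hk : k < C.size) :
    C.eval i = C.eval ⟨j, hj⟩ + C.eval ⟨k, hk⟩ := by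
  rw [Circuit.eval]; split <;> simp_all

lemma Circuit.eval_mul {C : Circuit K} {i : Fin C.size} {j k : ℕ}
    (h : C.gate i = .mul j k) (hj : j < C.size) (hk : k < C.size) :
    C.eval i = C.eval ⟨j, hj⟩ * C.eval ⟨k, hk⟩ := by
  rw [Circuit.eval]; split <;> simp_all

/-- Shift the children of a gate by `s`. -/
def Gate.shift {K} (s : ℕ) : Gate K → Gate K
  | .add j k => .add (s + j) (s + k)
  | .mul j k => .mul (s + j) (s + k)
  | g => g

omit [Field K] in
lemma Gate.children_shift {g : Gate K} {s j : ℕ} (h : j ∈ (g.shift s).children) :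
    ∃ j₀ ∈ g.children, j = s + j₀ := by
  cases g <;> simp [Gate.shift, Gate.children] at h ⊢ <;> tauto

/-- Evaluation agreement on a common prefix of gates. -/
lemma Circuit.eval_agree (C C' : Circuit K) (s : ℕ) (hs : s ≤ C.size) (hs' : s ≤ C'.size)
    (hg : ∀ t (ht : t < s), C.gate ⟨t, lt_of_lt_of_le ht hs⟩ = C'.gate ⟨t, lt_of_lt_of_le ht hs'⟩) :
    ∀ t (ht : t < s), C.eval ⟨t, lt_of_lt_of_le ht hs⟩ = C'.eval ⟨t, lt_of_lt_of_le ht hs'⟩ := by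
  intro t
  induction t using Nat.strong_induction_on with
  | _ t ih =>
    intro ht
    cases hgt : C.gate ⟨t, lt_of_lt_of_le ht hs⟩ with
    | const c => rw [Circuit.eval_const hgt, Circuit.eval_const (hg t ht ▸ hgt)]
    | var n => rw [Circuit.eval_var hgt, Circuit.eval_var (hg t ht ▸ hgt)]
    | add j k =>
      have hj : j < t := C.wf _ j (by rw [hgt]; simp [Gate.children])
      have hk : k < t := C.wf _ k (by rw [hgt]; simp [Gate.children])
      rw [Circuit.eval_add hgt (by omega) (by omega),
        Circuit.eval_add (C := C') (i := ⟨t, lt_of_lt_of_le ht hs'⟩)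
          (hg t ht ▸ hgt) (by omega) (by omega),
        ih j hj (by omega), ih k hk (by omega)]
    | mul j k =>
      have hj : j < t := C.wf _ j (by rw [hgt]; simp [Gate.children])
      have hk : k < t := C.wf _ k (by rw [hgt]; simp [Gate.children])
      rw [Circuit.eval_mul hgt (by omega) (by omega),
        Circuit.eval_mul (C := C') (i := ⟨t, lt_of_lt_of_le ht hs'⟩)
          (hg t ht ▸ hgt) (by omega) (by omega),
        ih j hj (by omega), ih k hk (by omega)]

/-- Evaluation of a shifted copy. -/
lemma Circuit.eval_shift (C C' : Circuit K) (s : ℕ) (hs : s + C.size ≤ C'.size)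
    (hg : ∀ t (ht : t < C.size),
      C'.gate ⟨s + t, by omega⟩ = (C.gate ⟨t, ht⟩).shift s) :
    ∀ t (ht : t < C.size), C'.eval ⟨s + t, by omega⟩ = C.eval ⟨t, ht⟩ := by
  intro t
  induction t using Nat.strong_induction_on with
  | _ t ih =>
    intro ht
    cases hgt : C.gate ⟨t, ht⟩ with
    | const c =>
      rw [Circuit.eval_const hgt,
        Circuit.eval_const (C := C') (i := ⟨s + t, by omega⟩) (c := c)
          (by rw [hg t ht, hgt]; rfl)]
    | var n =>
      rw [Circuit.eval_var hgt,
        Circuit.eval_var (C := C') (i := ⟨s + t, by omega⟩) (n := n)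
          (by rw [hg t ht, hgt]; rfl)]
    | add j k =>
      have hj : j < t := C.wf _ j (by rw [hgt]; simp [Gate.children])
      have hk : k < t := C.wf _ k (by rw [hgt]; simp [Gate.children])
      rw [Circuit.eval_add hgt (by omega) (by omega),
        Circuit.eval_add (C := C') (i := ⟨s + t, by omega⟩) (j := s + j) (k := s + k)
          (by rw [hg t ht, hgt]; rfl) (by omega) (by omega),
        ih j hj (by omega), ih k hk (by omega)]
    | mul j k =>
      have hj : j < t := C.wf _ j (by rw [hgt]; simp [Gate.children])
      have hk : k < t := C.wf _ k (by rw [hgt]; simp [Gate.children])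
      rw [Circuit.eval_mul hgt (by omega) (by omega),
        Circuit.eval_mul (C := C') (i := ⟨s + t, by omega⟩) (j := s + j) (k := s + k)
          (by rw [hg t ht, hgt]; rfl) (by omega) (by omega),
        ih j hj (by omega), ih k hk (by omega)]

omit [Field K] in
lemma Circuit.reach_prefix (C C' : Circuit K) (s : ℕ) (hs : s ≤ C.size) (hs' : s ≤ C'.size)
    (hg : ∀ t (ht : t < s), C'.gate ⟨t, lt_of_lt_of_le ht hs'⟩ = C.gate ⟨t, lt_of_lt_of_le ht hs⟩)
    {b : Fin C'.size} (hb : b.val < s) {a : Fin C'.size}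
    (h : Relation.ReflTransGen C'.Child a b) :
    ∃ (ha : a.val < s), Relation.ReflTransGen C.Child
      ⟨a.val, lt_of_lt_of_le ha hs⟩ ⟨b.val, lt_of_lt_of_le hb hs⟩ := by
  induction h using Relation.ReflTransGen.head_induction_on with
  | refl => exact ⟨hb, Relation.ReflTransGen.refl⟩
  | head h' _ ih =>
    obtain ⟨hc, hreach⟩ := ih
    rename_i x c _
    have hx : x.val ∈ (C.gate ⟨c.val, lt_of_lt_of_le hc hs⟩).children := by
      have := hg c.val hc
      have h'' : x.val ∈ (C'.gate c).children := h'
      rwa [show c = ⟨c.val, lt_of_lt_of_le hc hs'⟩ from Fin.ext rfl, this] at h''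
    have hxc : x.val < c.val := C.wf _ _ hx
    exact ⟨by omega, Relation.ReflTransGen.head hx hreach⟩

omit [Field K] in
lemma Circuit.reach_shift (C C' : Circuit K) (s : ℕ) (hs : s + C.size ≤ C'.size)
    (hg : ∀ t (ht : t < C.size), C'.gate ⟨s + t, by omega⟩ = (C.gate ⟨t, ht⟩).shift s)
    {b : Fin C'.size} (hb1 : s ≤ b.val) (hb2 : b.val < s + C.size) {a : Fin C'.size}
    (h : Relation.ReflTransGen C'.Child a b) :
    ∃ (ha1 : s ≤ a.val) (ha2 : a.val < s + C.size), Relation.ReflTransGen C.Child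
      ⟨a.val - s, by omega⟩ ⟨b.val - s, by omega⟩ := by
  induction h using Relation.ReflTransGen.head_induction_on with
  | refl => exact ⟨hb1, hb2, Relation.ReflTransGen.refl⟩
  | head h' _ ih =>
    obtain ⟨hc1, hc2, hreach⟩ := ih
    rename_i x c _
    have hx : x.val ∈ ((C.gate ⟨c.val - s, by omega⟩).shift s).children := by
      have := hg (c.val - s) (by omega)
      have h'' : x.val ∈ (C'.gate c).children := h'
      rwa [show c = ⟨s + (c.val - s), by omega⟩ from Fin.ext (by simp; omega), this] at h''
    obtain ⟨j₀, hj₀, hxeq⟩ := Gate.children_shift hx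
    have hj₀c : j₀ < c.val - s := C.wf _ _ hj₀
    refine ⟨by omega, by omega, ?_⟩
    refine Relation.ReflTransGen.head ?_ hreach
    show (x.val - s) ∈ _
    rw [show x.val - s = j₀ by omega]
    exact hj₀

/-- The gate map of the circuit for a contraction node. -/
def combineGate {K} [Zero K] (sL sR c : ℕ) (gL gR : ℕ → Gate K) (msrc : ℕ → ℕ → ℕ × ℕ) (i : ℕ) :
    Gate K :=
  if i < sL then gL i
  else if i < sL + sR then (gR (i - sL)).shift sL
  else
    let t := i - (sL + sR)
    let o := t % (2 * c + 1)
    if o = 0 then .const 0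
    else if o % 2 = 1 then
      .mul (msrc (t / (2 * c + 1)) (o / 2)).1 ((msrc (t / (2 * c + 1)) (o / 2)).2 + sL)
    else .add (i - 2) (i - 1)

/-- Total gate access. -/
def Circuit.gate' {K} [Zero K] (C : Circuit K) (t : ℕ) : Gate K :=
  if h : t < C.size then C.gate ⟨t, h⟩ else .const 0

lemma Circuit.gate'_children {C : Circuit K} {t j : ℕ} (h : j ∈ (C.gate' t).children) :
    j < t ∧ t < C.size := by
  unfold Circuit.gate' at h
  split at h
  · exact ⟨C.wf _ _ h, by assumption⟩
  · simp [Gate.children] at h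

/-- The combined circuit for a contraction node. -/
def combine (CL CR : Circuit K) (N c : ℕ) (msrc : ℕ → ℕ → ℕ × ℕ)
    (hsrc : ∀ b u, (msrc b u).1 < CL.size ∧ (msrc b u).2 < CR.size) : Circuit K where
  size := CL.size + CR.size + N * (2 * c + 1)
  gate i := combineGate CL.size CR.size c CL.gate' CR.gate' msrc i.val
  output := ⟨0, by have := CL.size_pos; omega⟩
  wf := by
    intro i j hj
    simp only [combineGate] at hj
    split at hj
    · exact (Circuit.gate'_children hj).1
    · split at hj
      · obtain ⟨j₀, hj₀, hjeq⟩ := Gate.children_shift hj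
        have := Circuit.gate'_children hj₀
        omega
      · split at hj
        · simp [Gate.children] at hj
        · split at hj
          · simp [Gate.children] at hj
            have h1 := (hsrc (((i : ℕ) - (CL.size + CR.size)) / (2 * c + 1))
              ((((i : ℕ) - (CL.size + CR.size)) % (2 * c + 1)) / 2)).1
            have h2 := (hsrc (((i : ℕ) - (CL.size + CR.size)) / (2 * c + 1))
              ((((i : ℕ) - (CL.size + CR.size)) % (2 * c + 1)) / 2)).2
            rcases hj with rfl | rfl <;> omega
          · simp [Gate.children] at hj
            have := CL.size_pos
            rcases hj with rfl | rfl <;> omega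

section Combine

variable (CL CR : Circuit K) (N c : ℕ) (msrc : ℕ → ℕ → ℕ × ℕ)
  (hsrc : ∀ b u, (msrc b u).1 < CL.size ∧ (msrc b u).2 < CR.size)

lemma combine_size : (combine CL CR N c msrc hsrc).size = CL.size + CR.size + N * (2*c+1) :=
  rfl

lemma combine_gate_low (t : ℕ) (ht : t < CL.size) (h : t < (combine CL CR N c msrc hsrc).size) :
    (combine CL CR N c msrc hsrc).gate ⟨t, h⟩ = CL.gate ⟨t, ht⟩ := by
  show combineGate _ _ _ _ _ _ t = _
  simp only [combineGate, if_pos ht, Circuit.gate', dif_pos ht]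

lemma combine_gate_mid (t : ℕ) (ht : t < CR.size)
    (h : CL.size + t < (combine CL CR N c msrc hsrc).size) :
    (combine CL CR N c msrc hsrc).gate ⟨CL.size + t, h⟩ = (CR.gate ⟨t, ht⟩).shift CL.size := by
  show combineGate _ _ _ _ _ _ (CL.size + t) = _
  simp only [combineGate, if_neg (by omega : ¬ CL.size + t < CL.size),
    if_pos (by omega : CL.size + t < CL.size + CR.size), Nat.add_sub_cancel_left,
    Circuit.gate', dif_pos ht]

lemma combine_gate_block (b o x : ℕ) (hb : b < N) (ho : o < 2*c+1)
    (hx : x = CL.size + CR.size + (b * (2*c+1) + o))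
    (h : x < (combine CL CR N c msrc hsrc).size) :
    (combine CL CR N c msrc hsrc).gate ⟨x, h⟩ =
      (if o = 0 then .const 0
       else if o % 2 = 1 then
        .mul (msrc b (o/2)).1 ((msrc b (o/2)).2 + CL.size)
       else .add (x - 2) (x - 1)) := by
  subst hx
  show combineGate _ _ _ _ _ _ _ = _
  simp only [combineGate, if_neg (by omega : ¬ CL.size + CR.size + (b * (2*c+1) + o) < CL.size),
    if_neg (by omega : ¬ CL.size + CR.size + (b * (2*c+1) + o) < CL.size + CR.size),
    Nat.add_sub_cancel_left]
  have h1 : (b * (2*c+1) + o) % (2*c+1) = o := by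
    rw [Nat.add_comm, Nat.add_mul_mod_self_right, Nat.mod_eq_of_lt ho]
  have h2 : (b * (2*c+1) + o) / (2*c+1) = b := by
    rw [Nat.add_comm, Nat.add_mul_div_right _ _ (by omega : 0 < 2*c+1),
      Nat.div_eq_of_lt ho, Nat.zero_add]
  rw [h1, h2]

lemma combine_eval_low (t : ℕ) (ht : t < CL.size) (h : t < (combine CL CR N c msrc hsrc).size) :
    (combine CL CR N c msrc hsrc).eval ⟨t, h⟩ = CL.eval ⟨t, ht⟩ := by
  have := Circuit.eval_agree CL (combine CL CR N c msrc hsrc) CL.size (le_refl _)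
    (by rw [combine_size]; omega)
    (fun t ht => (combine_gate_low CL CR N c msrc hsrc t ht _).symm) t ht
  exact this.symm

lemma combine_eval_mid (t x : ℕ) (ht : t < CR.size) (hx : x = CL.size + t)
    (h : x < (combine CL CR N c msrc hsrc).size) :
    (combine CL CR N c msrc hsrc).eval ⟨x, h⟩ = CR.eval ⟨t, ht⟩ := by
  subst hx
  exact Circuit.eval_shift CR (combine CL CR N c msrc hsrc) CL.size
    (by rw [combine_size]; omega)
    (fun t ht => combine_gate_mid CL CR N c msrc hsrc t ht _) t ht

lemma block_lt (b o : ℕ) (hb : b < N) (ho : o ≤ 2*c) :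
    CL.size + CR.size + (b * (2*c+1) + o) < (combine CL CR N c msrc hsrc).size := by
  rw [combine_size]
  have h1 : (b+1) * (2*c+1) ≤ N * (2*c+1) := Nat.mul_le_mul_right _ (by omega)
  have h2 : (b+1) * (2*c+1) = b * (2*c+1) + (2*c+1) := by ring
  omega

lemma combine_eval_odd (b u x : ℕ) (hb : b < N) (hu : u < c)
    (hx : x = CL.size + CR.size + (b * (2*c+1) + (2*u+1)))
    (h : x < (combine CL CR N c msrc hsrc).size) :
    (combine CL CR N c msrc hsrc).eval ⟨x, h⟩ =
      CL.eval ⟨(msrc b u).1, (hsrc b u).1⟩ * CR.eval ⟨(msrc b u).2, (hsrc b u).2⟩ := by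
  have hg := combine_gate_block CL CR N c msrc hsrc b (2*u+1) x hb (by omega) hx h
  rw [if_neg (by omega), if_pos (by omega : (2*u+1) % 2 = 1),
    (by omega : (2*u+1)/2 = u)] at hg
  rw [Circuit.eval_mul hg (by have := (hsrc b u).1; rw [combine_size]; omega)
    (by have := (hsrc b u).2; rw [combine_size]; omega)]
  rw [combine_eval_low CL CR N c msrc hsrc _ (hsrc b u).1,
    combine_eval_mid CL CR N c msrc hsrc _ _ (hsrc b u).2 (by omega)]

lemma combine_eval_even (b : ℕ) (hb : b < N) (u x : ℕ) (hu : u ≤ c)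
    (hx : x = CL.size + CR.size + (b * (2*c+1) + 2*u))
    (h : x < (combine CL CR N c msrc hsrc).size) :
    (combine CL CR N c msrc hsrc).eval ⟨x, h⟩ =
      ∑ i ∈ Finset.range u, (if h : i < c then
        CL.eval ⟨(msrc b i).1, (hsrc b i).1⟩ * CR.eval ⟨(msrc b i).2, (hsrc b i).2⟩
        else 0) := by
  induction u generalizing x with
  | zero =>
    have hg := combine_gate_block CL CR N c msrc hsrc b 0 x hb (by omega) (by omega) h
    rw [if_pos rfl] at hg
    rw [Circuit.eval_const hg]
    simp
  | succ u ih =>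
    have hg := combine_gate_block CL CR N c msrc hsrc b (2*u+2) x hb (by omega)
      (by omega) h
    rw [if_neg (by omega), if_neg (by omega)] at hg
    rw [Circuit.eval_add hg
      (by have := block_lt CL CR N c msrc hsrc b (2*u) hb (by omega); omega)
      (by have := block_lt CL CR N c msrc hsrc b (2*u+1) hb (by omega); omega)]
    rw [ih (x-2) (by omega) (by omega),
      combine_eval_odd CL CR N c msrc hsrc b u (x-1) hb (by omega) (by omega)]
    rw [Finset.sum_range_succ, dif_pos (by omega : u < c)]

lemma combine_md (hL : CL.MultDisjoint) (hR : CR.MultDisjoint) :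
    (combine CL CR N c msrc hsrc).MultDisjoint := by
  intro i j k hmul hj hk
  have hsz : (combine CL CR N c msrc hsrc).size = CL.size + CR.size + N * (2*c+1) := rfl
  by_cases hi1 : i.val < CL.size
  · -- gate in the left block
    have hg : CL.gate ⟨i.val, hi1⟩ = .mul j k :=
      (combine_gate_low CL CR N c msrc hsrc i.val hi1 i.isLt).symm.trans hmul
    have hjlt : j < i.val := CL.wf _ j (by rw [hg]; simp [Gate.children])
    have hklt : k < i.val := CL.wf _ k (by rw [hg]; simp [Gate.children])
    have hdisj := hL ⟨i.val, hi1⟩ j k hg (by omega) (by omega)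
    rw [Set.disjoint_left]
    intro a haj hak
    obtain ⟨ha1, hr1⟩ := Circuit.reach_prefix CL (combine CL CR N c msrc hsrc) CL.size
      (le_refl _) (by omega)
      (fun t ht => combine_gate_low CL CR N c msrc hsrc t ht (by omega))
      (b := ⟨j, hj⟩) (show j < CL.size by omega) haj
    obtain ⟨ha2, hr2⟩ := Circuit.reach_prefix CL (combine CL CR N c msrc hsrc) CL.size
      (le_refl _) (by omega)
      (fun t ht => combine_gate_low CL CR N c msrc hsrc t ht (by omega))
      (b := ⟨k, hk⟩) (show k < CL.size by omega) hak
    exact Set.disjoint_left.mp hdisj hr1 hr2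
  · by_cases hi2 : i.val < CL.size + CR.size
    · -- gate in the right block
      have ht : i.val - CL.size < CR.size := by omega
      have hieq : i = ⟨CL.size + (i.val - CL.size), by omega⟩ := Fin.ext (by simp; omega)
      rw [hieq] at hmul
      have hsh : (CR.gate ⟨i.val - CL.size, ht⟩).shift CL.size = .mul j k :=
        (combine_gate_mid CL CR N c msrc hsrc _ ht _).symm.trans hmul
      cases hg0 : CR.gate ⟨i.val - CL.size, ht⟩ with
      | const _ => rw [hg0] at hsh; simp [Gate.shift] at hsh
      | var _ => rw [hg0] at hsh; simp [Gate.shift] at hsh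
      | add _ _ => rw [hg0] at hsh; simp [Gate.shift] at hsh
      | mul j₀ k₀ =>
        rw [hg0] at hsh
        simp only [Gate.shift, Gate.mul.injEq] at hsh
        obtain ⟨rfl, rfl⟩ : CL.size + j₀ = j ∧ CL.size + k₀ = k := hsh
        have hj₀ : j₀ < CR.size := by
          have := CR.wf _ j₀ (by rw [hg0]; simp [Gate.children]); omega
        have hk₀ : k₀ < CR.size := by
          have := CR.wf _ k₀ (by rw [hg0]; simp [Gate.children]); omega
        have hdisj := hR ⟨i.val - CL.size, ht⟩ j₀ k₀ hg0 hj₀ hk₀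
        rw [Set.disjoint_left]
        intro a haj hak
        obtain ⟨ha1, ha2, hr1⟩ := Circuit.reach_shift CR (combine CL CR N c msrc hsrc)
          CL.size (by omega)
          (fun t ht => combine_gate_mid CL CR N c msrc hsrc t ht (by omega))
          (b := ⟨CL.size + j₀, hj⟩) (show CL.size ≤ CL.size + j₀ by omega)
          (show CL.size + j₀ < CL.size + CR.size by omega) haj
        obtain ⟨hb1, hb2, hr2⟩ := Circuit.reach_shift CR (combine CL CR N c msrc hsrc)
          CL.size (by omega)
          (fun t ht => combine_gate_mid CL CR N c msrc hsrc t ht (by omega))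
          (b := ⟨CL.size + k₀, hk⟩) (show CL.size ≤ CL.size + k₀ by omega)
          (show CL.size + k₀ < CL.size + CR.size by omega) hak
        simp only [Nat.add_sub_cancel_left] at hr1 hr2
        exact Set.disjoint_left.mp hdisj hr1 hr2
    · -- gate in the output block
      have hxlt : i.val - (CL.size + CR.size) < N * (2*c+1) := by
        have h2 := i.isLt; omega
      set x := i.val - (CL.size + CR.size) with hxdef
      have hdm := Nat.div_add_mod x (2*c+1)
      have ho : x % (2*c+1) < 2*c+1 := Nat.mod_lt _ (by omega)
      have hbN : x / (2*c+1) < N := by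
        rw [Nat.div_lt_iff_lt_mul (by omega : 0 < 2*c+1)]
        omega
      obtain ⟨b0, hb0⟩ : ∃ b0, x / (2*c+1) = b0 := ⟨_, rfl⟩
      obtain ⟨o0, ho0⟩ : ∃ o0, x % (2*c+1) = o0 := ⟨_, rfl⟩
      rw [hb0] at hdm hbN
      rw [ho0] at hdm ho
      have hcomm : (2*c+1) * b0 = b0 * (2*c+1) := Nat.mul_comm _ _
      have hieq : i = ⟨CL.size + CR.size + (b0 * (2*c+1) + o0), by omega⟩ := Fin.ext (by
          show (i : ℕ) = CL.size + CR.size + (b0 * (2*c+1) + o0)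
          omega)
      rw [hieq] at hmul
      have hgb := (combine_gate_block CL CR N c msrc hsrc b0 o0 _
        hbN ho rfl _).symm.trans hmul
      split_ifs at hgb with hc1 hc2
      all_goals try contradiction
      simp only [Gate.mul.injEq] at hgb
      obtain ⟨rfl, rfl⟩ := hgb
      have hjL : (msrc b0 (o0 / 2)).1 < CL.size := (hsrc _ _).1
      have hkR : (msrc b0 (o0 / 2)).2 < CR.size := (hsrc _ _).2
      rw [Set.disjoint_left]
      intro a haj hak
      have h1 : a.val < CL.size := by
        have := Circuit.reach_le (C := combine CL CR N c msrc hsrc) haj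
        simp at this; omega
      obtain ⟨h2, -, -⟩ := Circuit.reach_shift CR (combine CL CR N c msrc hsrc)
        CL.size (by omega)
        (fun t ht => combine_gate_mid CL CR N c msrc hsrc t ht (by omega))
        (b := ⟨(msrc b0 (o0 / 2)).2 + CL.size, hk⟩)
        (show CL.size ≤ (msrc b0 (o0 / 2)).2 + CL.size by omega)
        (show (msrc b0 (o0 / 2)).2 + CL.size < CL.size + CR.size by omega) hak
      omega

end Combine

/-! Leaf circuits -/

def Entry.toGate {K} : Entry K → Gate K
  | .const c => .const c
  | .var n => .var n

noncomputable def idxEquiv (l : List ℕ) : Idx l ≃ Fin l.prod :=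
  (@Fintype.equivFin _ (idxFintype l)).trans (finCongr (card_idx l))

noncomputable def leafC (T : Tens (Entry K)) : Circuit K where
  size := T.order.prod + 1
  gate i := if h : i.val < T.order.prod
    then (T.entry ((idxEquiv T.order).symm ⟨i.val, h⟩)).toGate
    else .const 0
  output := ⟨0, by omega⟩
  wf := by
    intro i j hj
    split at hj
    · cases hE : T.entry ((idxEquiv T.order).symm ⟨i.val, by assumption⟩) <;>
        rw [hE] at hj <;> simp [Entry.toGate, Gate.children] at hj
    · simp [Gate.children] at hj

lemma leafC_size (T : Tens (Entry K)) : (leafC T).size = T.order.prod + 1 := rfl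

lemma leafC_md (T : Tens (Entry K)) : (leafC T).MultDisjoint := by
  intro i j k h hj hk
  exfalso
  simp only [leafC] at h
  split at h
  · cases hE : T.entry ((idxEquiv T.order).symm ⟨i.val, by assumption⟩) <;>
      rw [hE] at h <;> simp [Entry.toGate] at h
  · simp at h

lemma leafC_eval (T : Tens (Entry K)) (e : Idx T.order) :
    (leafC T).eval ⟨(idxEquiv T.order e).val,
      by rw [leafC_size]; have := (idxEquiv T.order e).isLt; omega⟩ =
      (T.entry e).toPoly := by
  have hg : (leafC T).gate ⟨(idxEquiv T.order e).val,
      by rw [leafC_size]; have := (idxEquiv T.order e).isLt; omega⟩ = (T.entry e).toGate := by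
    simp only [leafC]
    rw [dif_pos (idxEquiv T.order e).isLt]
    congr 1
    rw [show (⟨(idxEquiv T.order e).val, (idxEquiv T.order e).isLt⟩ : Fin T.order.prod) =
      idxEquiv T.order e from Fin.ext rfl, Equiv.symm_apply_apply]
  cases hE : T.entry e with
  | const c => rw [hE] at hg; rw [Circuit.eval_const hg]; simp [Entry.toGate, Entry.toPoly]
  | var n => rw [hE] at hg; rw [Circuit.eval_var hg]; simp [Entry.toGate, Entry.toPoly]

/-! Formula-level lemmas -/

def SForm.AllPosIn : SForm K → Prop
  | .input T => ∀ x ∈ T.order, 0 < x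
  | .contr F G => F.AllPosIn ∧ G.AllPosIn

lemma SForm.ord_le (F : SForm K) (h : F.WF) : ∀ x ∈ F.eval.order, x ≤ F.inputMaxOrder := by
  induction F with
  | input T =>
    intro x hx
    simp only [SForm.eval] at hx
    exact le_foldr_max hx
  | contr F G ihF ihG =>
    obtain ⟨hF, hG, hc⟩ := h
    obtain ⟨c, ms, hGo, hTo, hspec⟩ := Tens.contr_spec _ _ hc
    intro x hx
    simp only [SForm.eval] at hx
    rw [hspec] at hx
    simp only [SForm.inputMaxOrder]
    rcases List.mem_append.mp hx with hx | hx
    · exact le_trans (ihF hF x ((List.dropLast_sublist _).subset hx)) (le_max_left _ _)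
    · have : x ∈ G.eval.order := by rw [hGo]; exact List.mem_cons_of_mem _ hx
      exact le_trans (ihG hG x this) (le_max_right _ _)

lemma SForm.allpos_ord (F : SForm K) (h : F.WF) (hp : F.AllPosIn) :
    ∀ x ∈ F.eval.order, 0 < x := by
  induction F with
  | input T => intro x hx; exact hp x hx
  | contr F G ihF ihG =>
    obtain ⟨hF, hG, hc⟩ := h
    obtain ⟨c, ms, hGo, hTo, hspec⟩ := Tens.contr_spec _ _ hc
    intro x hx
    simp only [SForm.eval] at hx
    rw [hspec] at hx
    rcases List.mem_append.mp hx with hx | hx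
    · exact ihF hF hp.1 x ((List.dropLast_sublist _).subset hx)
    · exact ihG hG hp.2 x (by rw [hGo]; exact List.mem_cons_of_mem _ hx)

lemma SForm.inputMaxOrder_le_size (F : SForm K) (hp : F.AllPosIn) :
    F.inputMaxOrder ≤ F.size := by
  induction F with
  | input T => exact foldr_max_le_prod hp
  | contr F G ihF ihG =>
    simp only [SForm.inputMaxOrder, SForm.size]
    exact max_le (le_trans (ihF hp.1) (by omega)) (le_trans (ihG hp.2) (by omega))

lemma SForm.dichotomy (F : SForm K) (h : F.WF) :
    F.AllPosIn ∨ ∀ e : Idx F.eval.order, F.eval.entry e = 0 := by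
  induction F with
  | input T =>
    by_cases hp : ∀ x ∈ T.order, 0 < x
    · exact Or.inl hp
    · right
      intro e
      push_neg at hp
      obtain ⟨x, hx, hx0⟩ := hp
      have h0 : (0:ℕ) ∈ T.order := by rwa [show x = 0 by omega] at hx
      exact (Idx.elim_zero h0 e).elim
  | contr F G ihF ihG =>
    obtain ⟨hF, hG, hc⟩ := h
    obtain ⟨c, ms, hGo, hTo, hspec⟩ := Tens.contr_spec _ _ hc
    rcases ihF hF with hZF | hZF
    · rcases ihG hG with hZG | hZG
      · exact Or.inl ⟨hZF, hZG⟩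
      · right
        show ∀ e : Idx (F.eval.contr G.eval).order, (F.eval.contr G.eval).entry e = 0
        rw [hspec]
        intro e
        show ∑ i : Fin c,
            F.eval.entry (Idx.cast hTo (Idx.app F.eval.order.dropLast
              (Idx.split F.eval.order.dropLast e).1 (i, PUnit.unit))) *
            G.eval.entry (Idx.cast hGo.symm (i, (Idx.split F.eval.order.dropLast e).2)) = 0
        refine Finset.sum_eq_zero fun i _ => ?_
        rw [hZG, mul_zero]
    · right
      show ∀ e : Idx (F.eval.contr G.eval).order, (F.eval.contr G.eval).entry e = 0
      rw [hspec]
      intro e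
      show ∑ i : Fin c,
          F.eval.entry (Idx.cast hTo (Idx.app F.eval.order.dropLast
            (Idx.split F.eval.order.dropLast e).1 (i, PUnit.unit))) *
          G.eval.entry (Idx.cast hGo.symm (i, (Idx.split F.eval.order.dropLast e).2)) = 0
      refine Finset.sum_eq_zero fun i _ => ?_
      rw [hZF, zero_mul]


omit [Field K] in
lemma Tens.entry_congr {R : Type} (T : Tens R) (os : List ℕ) (fn : Idx os → R)
    (h : T = ⟨os, fn⟩) (ho : T.order = os) (e : Idx T.order) :
    T.entry e = fn (Idx.cast ho e) := by
  subst h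
  rfl

/-! The main compilation lemma -/

lemma compile (k M : ℕ) (F : SForm K) (hWF : F.WF) (hmd : F.maxdim ≤ k)
    (hM : F.inputMaxOrder ≤ M) :
    ∃ C : Circuit K, C.MultDisjoint ∧
      C.size ≤ F.size * (3 * (M+1)^(k+1)) + 1 ∧
      ∀ e : Idx F.eval.order, ∃ g : Fin C.size, C.eval g = F.eval.entry e := by
  induction F with
  | input T =>
    refine ⟨leafC T, leafC_md T, ?_, ?_⟩
    · rw [leafC_size]
      have hB : 1 ≤ 3 * (M+1)^(k+1) := by
        have : 1 ≤ (M+1)^(k+1) := Nat.one_le_pow _ _ (by omega)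
        omega
      have h2 : T.order.prod * 1 ≤ T.order.prod * (3*(M+1)^(k+1)) :=
        Nat.mul_le_mul_left _ hB
      show _ ≤ T.tsize * _ + 1
      simp only [Tens.tsize]
      omega
    · intro e
      exact ⟨_, leafC_eval T e⟩
  | contr F G ihF ihG =>
    obtain ⟨hWFl, hWFr, hc⟩ := hWF
    have hmdF : F.maxdim ≤ k := by
      refine le_trans ?_ hmd
      show F.maxdim ≤ max ((F.eval.contr G.eval).dim) (max F.maxdim G.maxdim)
      exact le_trans (le_max_left _ _) (le_max_right _ _)
    have hmdG : G.maxdim ≤ k := by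
      refine le_trans ?_ hmd
      show G.maxdim ≤ max ((F.eval.contr G.eval).dim) (max F.maxdim G.maxdim)
      exact le_trans (le_max_right _ _) (le_max_right _ _)
    have hMF : F.inputMaxOrder ≤ M := by
      refine le_trans ?_ hM
      show F.inputMaxOrder ≤ max F.inputMaxOrder G.inputMaxOrder
      exact le_max_left _ _
    have hMG : G.inputMaxOrder ≤ M := by
      refine le_trans ?_ hM
      show G.inputMaxOrder ≤ max F.inputMaxOrder G.inputMaxOrder
      exact le_max_right _ _
    obtain ⟨CL, mdL, szL, corL⟩ := ihF hWFl hmdF hMF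
    obtain ⟨CR, mdR, szR, corR⟩ := ihG hWFr hmdG hMG
    choose outL hOutL using corL
    choose outR hOutR using corR
    obtain ⟨c, ms, hGo, hTo, hspec⟩ := Tens.contr_spec F.eval G.eval hc
    set os : List ℕ := F.eval.order.dropLast ++ ms with hos
    set N : ℕ := os.prod with hNdef
    set msrc : ℕ → ℕ → ℕ × ℕ := fun b u =>
      if h : b < N ∧ u < c then
        ((outL (Idx.cast hTo (Idx.app F.eval.order.dropLast
            (Idx.split F.eval.order.dropLast ((idxEquiv os).symm ⟨b, h.1⟩)).1
            ((⟨u, h.2⟩, PUnit.unit) : Idx [c])))).val,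
         (outR (Idx.cast hGo.symm
            ((⟨u, h.2⟩, (Idx.split F.eval.order.dropLast
              ((idxEquiv os).symm ⟨b, h.1⟩)).2) : Idx (c :: ms)))).val)
      else (0, 0) with hmsrc
    have hsrc : ∀ b u, (msrc b u).1 < CL.size ∧ (msrc b u).2 < CR.size := by
      intro b u
      simp only [hmsrc]
      split
      · exact ⟨(outL _).isLt, (outR _).isLt⟩
      · exact ⟨CL.size_pos, CR.size_pos⟩
    refine ⟨combine CL CR N c msrc hsrc, combine_md CL CR N c msrc hsrc mdL mdR, ?_, ?_⟩
    · -- size bound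
      have hsz := combine_size CL CR N c msrc hsrc
      have hcM : c ≤ M := by
        have hcmem : c ∈ G.eval.order := by rw [hGo]; exact List.mem_cons_self
        exact le_trans (SForm.ord_le G hWFr c hcmem) hMG
      have hordos : ∀ x ∈ os, x ≤ M := by
        intro x hx
        refine le_trans (SForm.ord_le (SForm.contr F G) ⟨hWFl, hWFr, hc⟩ x ?_) hM
        show x ∈ (F.eval.contr G.eval).order
        rw [hspec]
        exact hx
      have hlen : os.length ≤ k := by
        have h1 : (F.eval.contr G.eval).dim ≤ k := by
          refine le_trans ?_ hmd
          show _ ≤ max ((F.eval.contr G.eval).dim) (max F.maxdim G.maxdim)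
          exact le_max_left _ _
        have h2 : (F.eval.contr G.eval).dim = os.length := by
          show (F.eval.contr G.eval).order.length = _
          rw [hspec]
        omega
      have hNle : N ≤ (M+1)^k := prod_le_pow hordos hlen
      have hP0 : 1 ≤ (M+1)^k := Nat.one_le_pow _ _ (by omega)
      have key : N * (2*c+1) + 1 ≤ 3 * (M+1)^(k+1) := by
        have h1 : N * (2*c+1) ≤ (M+1)^k * (2*M+1) := Nat.mul_le_mul hNle (by omega)
        have h2 : 3*(M+1)^(k+1) = (M+1)^k * (3*M+3) := by rw [pow_succ]; ring
        have h3 : (M+1)^k * (2*M+1) + (M+1)^k * (M+2) = (M+1)^k * (3*M+3) := by ring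
        have h4 : 1*1 ≤ (M+1)^k * (M+2) := Nat.mul_le_mul hP0 (by omega)
        omega
      have hexp : (F.size + G.size + 1) * (3*(M+1)^(k+1)) =
          F.size * (3*(M+1)^(k+1)) + G.size * (3*(M+1)^(k+1)) + 3*(M+1)^(k+1) := by ring
      show (combine CL CR N c msrc hsrc).size ≤ (F.size + G.size + 1) * (3*(M+1)^(k+1)) + 1
      omega
    · -- correctness
      show ∀ e : Idx (F.eval.contr G.eval).order,
        ∃ g : Fin (combine CL CR N c msrc hsrc).size,
          (combine CL CR N c msrc hsrc).eval g = (F.eval.contr G.eval).entry e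
      intro e
      have horder : (F.eval.contr G.eval).order = os := by rw [hspec]
      set e' : Idx os := Idx.cast horder e with he'
      refine ⟨⟨CL.size + CR.size + ((idxEquiv os e').val * (2*c+1) + 2*c),
        block_lt CL CR N c msrc hsrc _ _ (idxEquiv os e').isLt (le_refl _)⟩, ?_⟩
      rw [combine_eval_even CL CR N c msrc hsrc (idxEquiv os e').val (idxEquiv os e').isLt c
        (CL.size + CR.size + ((idxEquiv os e').val * (2*c+1) + 2*c)) (le_refl c) rfl]
      refine Eq.trans ?_ (Tens.entry_congr _ _ _ hspec horder e).symm
      show _ = ∑ i : Fin c,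
          F.eval.entry (Idx.cast hTo (Idx.app F.eval.order.dropLast
            (Idx.split F.eval.order.dropLast e').1 (i, PUnit.unit))) *
          G.eval.entry (Idx.cast hGo.symm (i, (Idx.split F.eval.order.dropLast e').2))
      rw [← Fin.sum_univ_eq_sum_range]
      refine Finset.sum_congr rfl fun i _ => ?_
      rw [dif_pos i.isLt]
      have hred : msrc (idxEquiv os e').val i.val =
        ((outL (Idx.cast hTo (Idx.app F.eval.order.dropLast
            (Idx.split F.eval.order.dropLast e').1 (i, PUnit.unit)))).val,
         (outR (Idx.cast hGo.symm (i, (Idx.split F.eval.order.dropLast e').2))).val) := by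
        simp only [hmsrc]
        rw [dif_pos ⟨(idxEquiv os e').isLt, i.isLt⟩]
        simp only [Fin.eta, Equiv.symm_apply_apply]
      have h1 : (⟨(msrc (idxEquiv os e').val i.val).1,
          (hsrc (idxEquiv os e').val i.val).1⟩ : Fin CL.size) =
          outL (Idx.cast hTo (Idx.app F.eval.order.dropLast
            (Idx.split F.eval.order.dropLast e').1 (i, PUnit.unit))) :=
        Fin.ext (by
          show (msrc (idxEquiv os e').val i.val).1 = _
          rw [hred])
      have h2 : (⟨(msrc (idxEquiv os e').val i.val).2,
          (hsrc (idxEquiv os e').val i.val).2⟩ : Fin CR.size) =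
          outR (Idx.cast hGo.symm (i, (Idx.split F.eval.order.dropLast e').2)) :=
        Fin.ext (by
          show (msrc (idxEquiv os e').val i.val).2 = _
          rw [hred])
      rw [h1, h2, hOutL, hOutR]

open Polynomial in
theorem star_formulas_bounded_maxdim_in_VP' {K : Type} [Field K] (k : ℕ)
    (F : ℕ → SForm K) (f : ℕ → MvPolynomial ℕ K) (Q : Polynomial ℕ)
    (hWF : ∀ n, (F n).WF) (hsize : ∀ n, (F n).size ≤ Q.eval n)
    (hdim : ∀ n, (F n).maxdim ≤ k) (hcomp : ∀ n, (F n).ComputesPoly (f n)) :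
    VP f := by
  classical
  set P : Polynomial ℕ := Q * (Polynomial.C 3 * (Q + 1)^(k+1)) + Polynomial.C 2 with hP
  have hkey : ∀ n, ∃ C : Circuit K, C.MultDisjoint ∧ C.Computes (f n) ∧ C.size ≤ P.eval n := by
    intro n
    have hPe : P.eval n = Q.eval n * (3 * (Q.eval n + 1)^(k+1)) + 2 := by
      simp [hP]
    obtain ⟨ht1, hent⟩ := hcomp n
    have hpos : ∀ x ∈ (F n).eval.order, 0 < x := prod_eq_one_pos ht1
    obtain ⟨e0⟩ := idx_nonempty hpos
    rcases SForm.dichotomy (F n) (hWF n) with hAP | hzero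
    · obtain ⟨C, md, hsz, cor⟩ := compile k (Q.eval n) (F n) (hWF n) (hdim n)
        (le_trans (SForm.inputMaxOrder_le_size (F n) hAP) (hsize n))
      obtain ⟨g, hg⟩ := cor e0
      refine ⟨⟨C.size, C.gate, g, C.wf⟩, md, ?_, ?_⟩
      · show Circuit.eval _ _ = f n
        have hag := Circuit.eval_agree C ⟨C.size, C.gate, g, C.wf⟩ C.size (le_refl _)
          (le_refl _) (fun t ht => rfl) g.val g.isLt
        exact hag.symm.trans (hg.trans (hent e0))
      · show C.size ≤ P.eval n
        rw [hPe]
        have hm := Nat.mul_le_mul_right (3 * (Q.eval n + 1)^(k+1)) (hsize n)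
        omega
    · have hf0 : f n = 0 := by rw [← hent e0, hzero e0]
      refine ⟨⟨1, fun _ => .const 0, ⟨0, one_pos⟩,
        by intro i j hj; simp [Gate.children] at hj⟩, ?_, ?_, ?_⟩
      · intro i j k h hj hk
        cases h
      · show Circuit.eval _ _ = f n
        rw [hf0]
        have h0 : Circuit.eval (K := K) ⟨1, fun _ => .const 0, ⟨0, one_pos⟩,
            by intro i j hj; simp [Gate.children] at hj⟩ ⟨0, one_pos⟩ =
            MvPolynomial.C 0 := Circuit.eval_const rfl
        rw [map_zero] at h0
        exact h0
      · show 1 ≤ P.eval n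
        rw [hPe]
        omega
  choose Cc hC using hkey
  exact ⟨Cc, P, fun n => hC n⟩
end Aux


end TC


open TC

/-- families of polynomials computed by polynomial-size
`{*}`-formulas of bounded maximal dimension are in VP. -/
theorem star_formulas_bounded_maxdim_in_VP {K : Type} [Field K] (k : ℕ)
    (F : ℕ → SForm K) (f : ℕ → MvPolynomial ℕ K) (Q : Polynomial ℕ)
    (hWF : ∀ n, (F n).WF) (hsize : ∀ n, (F n).size ≤ Q.eval n)
    (hdim : ∀ n, (F n).maxdim ≤ k) (hcomp : ∀ n, (F n).ComputesPoly (f n)) :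
    VP f :=
  star_formulas_bounded_maxdim_in_VP' k F f Q hWF hsize hdim hcomp
end

section
/- Let F be a totally tame {*}-formula of dimension k and input dimension p, and let E be a totally tame {*}-formula of dimension 1 and input dimension at most p. If the last order of the tensor computed by F equals the order of the vector computed by E (so F * E is well defined), then there exists a totally tame {*}-formula G_r of size |F| + |E| + 1 computing the same tensor as F * E; similarly, if the order of the vector computed by E equals the first order of the tensor computed by F (so E * F is well defined), then there exists a totally tame {*}-formula G_l of size |F| + |E| + 1 computing the same tensor as E * F. -/
namespace TC

variable {R : Type}

@[simp] theorem Idx.cast_self {xs : List ℕ} (h : xs = xs) (e : Idx xs) : Idx.cast h e = e := rfl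

theorem Idx.cast_cast {xs ys zs : List ℕ} (h : xs = ys) (h' : ys = zs) (e : Idx xs) :
    Idx.cast h' (Idx.cast h e) = Idx.cast (h.trans h') e := by subst h h'; rfl

theorem Idx.cast_cons {x : ℕ} {xs ys : List ℕ} (h : xs = ys) (h' : x :: xs = x :: ys)
    (i : Fin x) (e : Idx xs) :
    Idx.cast h' ((i, e) : Idx (x :: xs)) = (i, Idx.cast h e) := by subst h; rfl

theorem Idx.cast_app_left {xs xs' ys : List ℕ} (hx : xs = xs') (h : xs ++ ys = xs' ++ ys)
    (u : Idx xs) (w : Idx ys) :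
    Idx.cast h (Idx.app xs u w) = Idx.app xs' (Idx.cast hx u) w := by subst hx; rfl

theorem Idx.split_cast {xs xs' ys : List ℕ} (hx : xs = xs') (h : xs ++ ys = xs' ++ ys)
    (e : Idx (xs ++ ys)) :
    Idx.split xs' (Idx.cast h e) = (Idx.cast hx (Idx.split xs e).1, (Idx.split xs e).2) := by
  subst hx; rfl

@[simp] theorem Idx.split_app (xs : List ℕ) {ys : List ℕ} (u : Idx xs) (w : Idx ys) :
    Idx.split xs (Idx.app xs u w) = (u, w) := by
  induction xs with
  | nil => rfl
  | cons x xs ih => simp [Idx.split, Idx.app, ih u.2]; rfl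

theorem Idx.cast_app_assoc {xs ys zs : List ℕ} (h : (xs ++ ys) ++ zs = xs ++ (ys ++ zs))
    (u : Idx xs) (s : Idx ys) (w : Idx zs) :
    Idx.cast h (Idx.app (xs ++ ys) (Idx.app xs u s) w) = Idx.app xs u (Idx.app ys s w) := by
  induction xs with
  | nil => simp [Idx.app]
  | cons x xs ih =>
      have h' : (xs ++ ys) ++ zs = xs ++ (ys ++ zs) := by simp
      exact (Idx.cast_cons h' h u.1 (Idx.app (xs ++ ys) (Idx.app xs u.2 s) w)).trans
        (congrArg (Prod.mk u.1) (ih h' u.2))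

theorem Idx.split_cast_assoc {xs ys zs : List ℕ} (h : xs ++ (ys ++ zs) = (xs ++ ys) ++ zs)
    (e : Idx (xs ++ (ys ++ zs))) :
    Idx.split (xs ++ ys) (Idx.cast h e) =
      (Idx.app xs (Idx.split xs e).1 (Idx.split ys (Idx.split xs e).2).1,
       (Idx.split ys (Idx.split xs e).2).2) := by
  induction xs with
  | nil => simp [Idx.split, Idx.app]
  | cons x xs ih =>
      have h' : xs ++ (ys ++ zs) = (xs ++ ys) ++ zs := by simp
      rw [show Idx.cast h e = (e.1, Idx.cast h' e.2) from Idx.cast_cons h' h e.1 e.2]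
      simp [Idx.split, Idx.app, ih h']

theorem tens_mk_eq {l l' : List ℕ} (h : l = l') (f : Idx l → R) (g : Idx l' → R)
    (hfg : ∀ e, f e = g (Idx.cast h e)) : (⟨l, f⟩ : Tens R) = ⟨l', g⟩ := by
  subst h; exact congrArg _ (funext fun e => hfg e)

theorem tens_eta (T : Tens R) {l : List ℕ} (h : T.order = l) :
    T = ⟨l, fun e => T.entry (Idx.cast h.symm e)⟩ := by cases T; subst h; rfl

theorem order_dropLast_concat {l : List ℕ} {c : ℕ} (h : l.getLast? = some c) :
    l.dropLast ++ [c] = l :=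
  List.dropLast_append_getLast? c h

theorem Tens.contr_raw [CommSemiring R] (T G : Tens R) (c : ℕ) (ys : List ℕ)
    (hT : T.order.getLast? = some c) (hG : G.order = c :: ys) :
    T.contr G = ⟨T.order.dropLast ++ ys, fun e =>
      ∑ i : Fin c,
        T.entry (Idx.cast (order_dropLast_concat hT)
          (Idx.app T.order.dropLast (Idx.split T.order.dropLast e).1 ((i, PUnit.unit) : Idx [c]))) *
        G.entry (Idx.cast hG.symm ((i, (Idx.split T.order.dropLast e).2) : Idx (c :: ys)))⟩ := by
  unfold Tens.contr
  split
  · rename_i c1 c' ms hT1 hG1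
    rw [hT] at hT1
    cases hT1
    rw [hG] at hG1
    cases hG1
    rw [dif_pos rfl]
  · rename_i hbad
    exact (hbad c c ys hT hG).elim

theorem Tens.contr_concat [CommSemiring R] (as : List ℕ) (c : ℕ) (ys : List ℕ)
    (a : Idx (as ++ [c]) → R) (b : Idx (c :: ys) → R) :
    Tens.contr ⟨as ++ [c], a⟩ ⟨c :: ys, b⟩ =
      ⟨as ++ ys, fun e => ∑ i : Fin c,
        a (Idx.app as (Idx.split as e).1 ((i, PUnit.unit) : Idx [c])) *
        b (i, (Idx.split as e).2)⟩ := by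
  have hT : (⟨as ++ [c], a⟩ : Tens R).order.getLast? = some c := by simp
  rw [Tens.contr_raw _ _ c ys hT rfl]
  have hD : (as ++ [c]).dropLast = as := by simp
  apply tens_mk_eq (by rw [hD])
  intro e
  rw [Idx.split_cast hD]
  simp only [Idx.cast_self]
  congr 1
  funext i
  congr 1
  exact congrArg a (Idx.cast_app_left hD _ _ _)

end TC
namespace TC

theorem Tens.contr_assoc_mk {R : Type} [CommSemiring R] (as : List ℕ) (c : ℕ) (bs : List ℕ)
    (d : ℕ) (a : Idx (as ++ [c]) → R) (b : Idx ((c :: bs) ++ [d]) → R) (v : Idx [d] → R) :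
    Tens.contr ⟨as ++ [c], a⟩ (Tens.contr ⟨(c :: bs) ++ [d], b⟩ ⟨[d], v⟩) =
      Tens.contr (Tens.contr ⟨as ++ [c], a⟩ ⟨(c :: bs) ++ [d], b⟩) ⟨[d], v⟩ := by
  have h2 : as ++ (bs ++ [d]) = (as ++ bs) ++ [d] := (List.append_assoc as bs [d]).symm
  have e1 : Tens.contr (⟨(c :: bs) ++ [d], b⟩ : Tens R) ⟨[d], v⟩ =
      (⟨c :: (bs ++ []), fun e => ∑ j : Fin d,
        b (Idx.app (c :: bs) (Idx.split (c :: bs) e).1 ((j, PUnit.unit) : Idx [d])) *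
        v (j, (Idx.split (c :: bs) e).2)⟩ : Tens R) :=
    Tens.contr_concat (c :: bs) d [] b v
  have e2 : Tens.contr (⟨as ++ [c], a⟩ : Tens R) ⟨(c :: bs) ++ [d], b⟩ =
      (⟨(as ++ bs) ++ [d], fun e => ∑ i : Fin c,
        a (Idx.app as (Idx.split as (Idx.cast h2.symm e)).1 ((i, PUnit.unit) : Idx [c])) *
        b ((i, (Idx.split as (Idx.cast h2.symm e)).2) : Idx (c :: (bs ++ [d])))⟩ : Tens R) := by
    refine (Tens.contr_concat as c (bs ++ [d]) a b).trans (tens_mk_eq h2 _ _ ?_)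
    intro e
    simp only [Idx.cast_cast, Idx.cast_self]
  rw [e1, e2]
  rw [Tens.contr_concat as c (bs ++ []) a _]
  rw [Tens.contr_concat (as ++ bs) d [] _ v]
  apply tens_mk_eq (by simp)
  intro e
  simp only [Idx.split_cast_assoc, Idx.cast_app_assoc, Idx.split_app, Idx.cast_cast,
    Idx.cast_self, Idx.split, Idx.app]
  have key : ∀ (xs ys : List ℕ) (h : (xs ++ ys) ++ [d] = xs ++ (ys ++ [d])) (u : Idx xs)
      (s : Idx ys) (j : Fin d), Idx.cast h (@Idx.app (xs ++ ys) [d] (Idx.app xs u s)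
        (@Prod.mk (Fin d) (Idx []) j PUnit.unit)) =
        Idx.app xs u (@Idx.app ys [d] s (@Prod.mk (Fin d) (Idx []) j PUnit.unit)) :=
    fun _ _ h u s j => Idx.cast_app_assoc h u s _
  simp only [key, Idx.split_app]
  simp only [Finset.mul_sum, Finset.sum_mul, mul_assoc]
  rw [Finset.sum_comm]

end TC
namespace TC

@[simp] theorem Idx.cast_nil_append₁ {xs : List ℕ} (h : xs = [] ++ xs) (e : Idx xs) :
    Idx.cast h e = e := rfl

@[simp] theorem Idx.cast_nil_append₂ {xs : List ℕ} (h : [] ++ xs = xs) (e : Idx ([] ++ xs)) :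
    Idx.cast h e = e := rfl

theorem Tens.contr_assoc_vecL_mk {R : Type} [CommSemiring R] (c : ℕ) (as : List ℕ) (d : ℕ)
    (bs : List ℕ) (v : Idx ([] ++ [c]) → R) (a : Idx ((c :: as) ++ [d]) → R)
    (b : Idx (d :: bs) → R) :
    Tens.contr (Tens.contr ⟨[] ++ [c], v⟩ ⟨(c :: as) ++ [d], a⟩) ⟨d :: bs, b⟩ =
      Tens.contr ⟨[] ++ [c], v⟩ (Tens.contr ⟨(c :: as) ++ [d], a⟩ ⟨d :: bs, b⟩) := by
  have h1 : ([] : List ℕ) ++ (as ++ [d]) = as ++ [d] := by simp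
  have e1 : Tens.contr (⟨[] ++ [c], v⟩ : Tens R) ⟨(c :: as) ++ [d], a⟩ =
      (⟨as ++ [d], fun e => ∑ i : Fin c,
        v (Idx.app [] (Idx.split [] (Idx.cast h1.symm e)).1 ((i, PUnit.unit) : Idx [c])) *
        a ((i, (Idx.split [] (Idx.cast h1.symm e)).2) : Idx (c :: (as ++ [d])))⟩ : Tens R) := by
    refine (Tens.contr_concat [] c (as ++ [d]) v a).trans (tens_mk_eq h1 _ _ ?_)
    intro e
    simp only [Idx.cast_cast, Idx.cast_self, Idx.cast_nil_append₂]
  have e2 : Tens.contr (⟨(c :: as) ++ [d], a⟩ : Tens R) ⟨d :: bs, b⟩ =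
      (⟨c :: (as ++ bs), fun e => ∑ j : Fin d,
        a (Idx.app (c :: as) (Idx.split (c :: as) e).1 ((j, PUnit.unit) : Idx [d])) *
        b (j, (Idx.split (c :: as) e).2)⟩ : Tens R) :=
    Tens.contr_concat (c :: as) d bs a b
  rw [e1, e2]
  rw [Tens.contr_concat as d bs _ b]
  rw [Tens.contr_concat [] c (as ++ bs) v _]
  apply tens_mk_eq (by simp)
  intro e
  simp only [Idx.split, Idx.app, Idx.cast_cast, Idx.cast_self, Idx.cast_nil_append₁,
    Idx.cast_nil_append₂, Idx.split_app]
  simp only [Finset.mul_sum, Finset.sum_mul, mul_assoc]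
  rw [Finset.sum_comm]

end TC
namespace TC

variable {R : Type}

theorem Tens.Compatible.exists_c {T G : Tens R} (h : T.Compatible G) :
    ∃ c, T.order.getLast? = some c ∧ G.order = c :: G.order.tail := by
  obtain ⟨h1, h2, h3⟩ := h
  cases hG : G.order with
  | nil => exact absurd hG h2
  | cons c t =>
      refine ⟨c, ?_, ?_⟩
      · rw [h3, hG]
        rfl
      · rfl

theorem Tens.contr_order [CommSemiring R] {T G : Tens R} (h : T.Compatible G) :
    (T.contr G).order = T.order.dropLast ++ G.order.tail := by
  obtain ⟨c, h1, h2⟩ := h.exists_c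
  rw [Tens.contr_raw T G c _ h1 h2]

theorem Tens.contr_vec_order [CommSemiring R] {T E : Tens R} (h : T.Compatible E)
    (hE : E.order.length = 1) : (T.contr E).order = T.order.dropLast := by
  rw [Tens.contr_order h]
  have : E.order.tail = [] :=
    List.length_eq_zero_iff.mp (by rw [List.length_tail, hE])
  rw [this, List.append_nil]

theorem Tens.contr_vecL_order [CommSemiring R] {E T : Tens R} (h : E.Compatible T)
    (hE : E.order.length = 1) : (E.contr T).order = T.order.tail := by
  rw [Tens.contr_order h]
  have : E.order.dropLast = [] :=
    List.length_eq_zero_iff.mp (by rw [List.length_dropLast, hE])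
  rw [this, List.nil_append]

/-- General associativity with a vector on the right. -/
theorem Tens.contr_assoc_vec [CommSemiring R] {A B E : Tens R} (hAB : A.Compatible B)
    (hBE : B.Compatible E) (hB : 2 ≤ B.order.length) (hE : E.order.length = 1) :
    A.contr (B.contr E) = (A.contr B).contr E := by
  obtain ⟨c, hA1, hB1⟩ := hAB.exists_c
  obtain ⟨d, hB2, hE1⟩ := hBE.exists_c
  have htail : E.order.tail = [] := by
    cases hEo : E.order with
    | nil => rfl
    | cons x t =>
        rw [hEo] at hE
        simp only [List.length_cons] at hE
        simp [hEo, List.length_eq_zero_iff.mp (by omega : t.length = 0)]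
  have hEord : E.order = [d] := by rw [hE1, htail]
  have htne : B.order.tail ≠ [] := by
    cases hBo : B.order with
    | nil => simp [hBo] at hB
    | cons x t => rw [hBo] at hB; simp at hB; simpa using List.length_pos_iff.mp (by omega)
  have htl : B.order.tail.getLast? = some d := by
    conv at hB2 => rw [hB1]
    cases ht : B.order.tail with
    | nil => exact absurd ht htne
    | cons x t => rw [ht] at hB2; rw [← hB2, List.getLast?_cons_cons]
  have hBord : B.order = (c :: B.order.tail.dropLast) ++ [d] := by
    conv_lhs => rw [hB1, ← order_dropLast_concat htl]
    rfl
  have hAord : A.order = A.order.dropLast ++ [c] := (order_dropLast_concat hA1).symm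
  rw [tens_eta A hAord, tens_eta B hBord, tens_eta E hEord]
  exact Tens.contr_assoc_mk A.order.dropLast c B.order.tail.dropLast d _ _ _

/-- General associativity with a vector on the left. -/
theorem Tens.contr_assoc_vecL [CommSemiring R] {E A B : Tens R} (hEA : E.Compatible A)
    (hAB : A.Compatible B) (hA : 2 ≤ A.order.length) (hE : E.order.length = 1) :
    (E.contr A).contr B = E.contr (A.contr B) := by
  obtain ⟨c, hE1, hA1⟩ := hEA.exists_c
  obtain ⟨d, hA2, hB1⟩ := hAB.exists_c
  have hEord : E.order = [] ++ [c] := by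
    rw [List.nil_append]
    have := order_dropLast_concat hE1
    have hdl : E.order.dropLast = [] := by
      have := List.length_dropLast (xs := E.order)
      rw [hE] at this
      exact List.length_eq_zero_iff.mp (by omega)
    rw [hdl] at this
    exact this.symm
  have htne : A.order.tail ≠ [] := by
    cases hAo : A.order with
    | nil => simp [hAo] at hA
    | cons x t => rw [hAo] at hA; simp at hA; simpa using List.length_pos_iff.mp (by omega)
  have htl : A.order.tail.getLast? = some d := by
    conv at hA2 => rw [hA1]
    cases ht : A.order.tail with
    | nil => exact absurd ht htne
    | cons x t => rw [ht] at hA2; rw [← hA2, List.getLast?_cons_cons]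
  have hAord : A.order = (c :: A.order.tail.dropLast) ++ [d] := by
    conv_lhs => rw [hA1, ← order_dropLast_concat htl]
    rfl
  have hBord : B.order = d :: B.order.tail := hB1
  rw [tens_eta A hAord, tens_eta B hBord, tens_eta E hEord]
  exact Tens.contr_assoc_vecL_mk c A.order.tail.dropLast d B.order.tail _ _ _

end TC
namespace TC

variable {R : Type} [CommSemiring R]

theorem head?_dropLast {l : List ℕ} (h : 2 ≤ l.length) : l.dropLast.head? = l.head? := by
  match l, h with
  | x :: y :: s, _ => rfl

theorem getLast?_tail {l : List ℕ} (h : 2 ≤ l.length) : l.tail.getLast? = l.getLast? := by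
  match l, h with
  | x :: y :: s, _ => rw [List.getLast?_cons_cons]; rfl

theorem tail_append_of_ne_nil' {l l' : List ℕ} (h : l ≠ []) : (l ++ l').tail = l.tail ++ l' := by
  cases l with
  | nil => exact absurd rfl h
  | cons x t => rfl

theorem Tens.compat_contr_right {A B E : Tens R} (hAB : A.Compatible B) (hBE : B.Compatible E)
    (hB : 2 ≤ B.order.length) (hE : E.order.length = 1) : A.Compatible (B.contr E) := by
  refine ⟨hAB.1, ?_, ?_⟩
  · rw [Tens.contr_vec_order hBE hE]
    exact List.length_pos_iff.mp (by rw [List.length_dropLast]; omega)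
  · rw [Tens.contr_vec_order hBE hE, head?_dropLast hB]
    exact hAB.2.2

theorem Tens.compat_contr_left {A B E : Tens R} (hAB : A.Compatible B) (hBE : B.Compatible E)
    (hB : 2 ≤ B.order.length) : (A.contr B).Compatible E := by
  have htne : B.order.tail ≠ [] := List.length_pos_iff.mp (by rw [List.length_tail]; omega)
  refine ⟨?_, hBE.2.1, ?_⟩
  · rw [Tens.contr_order hAB]
    simp [htne]
  · rw [Tens.contr_order hAB, List.getLast?_append_of_ne_nil _ htne, getLast?_tail hB]
    exact hBE.2.2

theorem Tens.compat_contrL_left {E A B : Tens R} (hEA : E.Compatible A) (hAB : A.Compatible B)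
    (hA : 2 ≤ A.order.length) (hE : E.order.length = 1) : (E.contr A).Compatible B := by
  refine ⟨?_, hAB.2.1, ?_⟩
  · rw [Tens.contr_vecL_order hEA hE]
    exact List.length_pos_iff.mp (by rw [List.length_tail]; omega)
  · rw [Tens.contr_vecL_order hEA hE, getLast?_tail hA]
    exact hAB.2.2

theorem Tens.compat_contrL_right {E A B : Tens R} (hEA : E.Compatible A) (hAB : A.Compatible B)
    (hA : 2 ≤ A.order.length) : E.Compatible (A.contr B) := by
  have hdne : A.order.dropLast ≠ [] := List.length_pos_iff.mp (by rw [List.length_dropLast]; omega)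
  refine ⟨hEA.1, ?_, ?_⟩
  · rw [Tens.contr_order hAB]
    simp [hdne]
  · rw [Tens.contr_order hAB, List.head?_append_of_ne_nil _ hdne, head?_dropLast hA]
    exact hEA.2.2

/-- Chain compatibility of successive contractions on the right. -/
def Tens.VecChain : Tens R → List (Tens R) → Prop
  | _, [] => True
  | T, E :: Es => T.Compatible E ∧ Tens.VecChain (T.contr E) Es

/-- Chain compatibility of successive contractions on the left. -/
def Tens.VecChainL : Tens R → List (Tens R) → Prop
  | _, [] => True
  | T, E :: Es => E.Compatible T ∧ Tens.VecChainL (E.contr T) Es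

theorem dropLast_iter_length (m : ℕ) (l : List ℕ) :
    (List.dropLast^[m] l).length = l.length - m := by
  induction m generalizing l with
  | zero => simp
  | succ n ih =>
      rw [Function.iterate_succ_apply, ih, List.length_dropLast]
      omega

theorem dropLast_iter_append {l1 l2 : List ℕ} {m : ℕ} (h : m ≤ l2.length) :
    List.dropLast^[m] (l1 ++ l2) = l1 ++ List.dropLast^[m] l2 := by
  induction m generalizing l2 with
  | zero => simp
  | succ n ih =>
      have hne : l2 ≠ [] := List.length_pos_iff.mp (by omega)
      rw [Function.iterate_succ_apply, List.dropLast_append_of_ne_nil hne,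
        ih (by rw [List.length_dropLast]; omega), Function.iterate_succ_apply]

theorem dropLast_iter_self (l : List ℕ) : List.dropLast^[l.length] l = [] :=
  List.length_eq_zero_iff.mp (by rw [dropLast_iter_length]; omega)

theorem Tens.vecChain_length_le {T : Tens R} {Es : List (Tens R)}
    (hv : ∀ E ∈ Es, E.order.length = 1) (hch : Tens.VecChain T Es) :
    Es.length ≤ T.order.length := by
  induction Es generalizing T with
  | nil => simp
  | cons E Es ih =>
      obtain ⟨hc, hch⟩ := hch
      have h1 : (T.contr E).order = T.order.dropLast :=
        Tens.contr_vec_order hc (hv E (by simp))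
      have h2 := ih (fun E hE => hv E (by simp [hE])) hch
      rw [h1, List.length_dropLast] at h2
      have h3 : T.order ≠ [] := hc.1
      have h4 : 0 < T.order.length := List.length_pos_iff.mpr h3
      simpa using by omega
  
theorem Tens.foldl_contr_order {T : Tens R} {Es : List (Tens R)}
    (hv : ∀ E ∈ Es, E.order.length = 1) (hch : Tens.VecChain T Es) :
    (List.foldl Tens.contr T Es).order = List.dropLast^[Es.length] T.order := by
  induction Es generalizing T with
  | nil => rfl
  | cons E Es ih =>
      obtain ⟨hc, hch⟩ := hch
      rw [List.foldl_cons, ih (fun E hE => hv E (by simp [hE])) hch,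
        Tens.contr_vec_order hc (hv E (by simp)), List.length_cons,
        ← Function.iterate_succ_apply]

theorem Tens.vecChain_suffix {s : List ℕ} {l1 l1' : List ℕ} {T T' : Tens R}
    {Es : List (Tens R)} (hv : ∀ E ∈ Es, E.order.length = 1) (hlen : Es.length ≤ s.length)
    (hT : T.order = l1 ++ s) (hT' : T'.order = l1' ++ s) (hch : Tens.VecChain T Es) :
    Tens.VecChain T' Es := by
  induction Es generalizing s T T' with
  | nil => trivial
  | cons E Es ih =>
      obtain ⟨hc, hch⟩ := hch
      have hsne : s ≠ [] := List.length_pos_iff.mp (by simp at hlen; omega)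
      have hcomp : T'.Compatible E := by
        refine ⟨by simp [hT', hsne], hc.2.1, ?_⟩
        have h22 := hc.2.2
        rw [hT, List.getLast?_append_of_ne_nil _ hsne] at h22
        rw [hT', List.getLast?_append_of_ne_nil _ hsne]
        exact h22
      refine ⟨hcomp, ih (fun E hE => hv E (by simp [hE])) (s := s.dropLast)
        (by rw [List.length_dropLast]; simp at hlen; omega) ?_ ?_ hch⟩
      · rw [Tens.contr_vec_order hc (hv E (by simp)), hT,
          List.dropLast_append_of_ne_nil hsne]
      · rw [Tens.contr_vec_order hcomp (hv E (by simp)), hT',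
          List.dropLast_append_of_ne_nil hsne]

theorem Tens.vecChain_append {T : Tens R} {Es1 Es2 : List (Tens R)}
    (hch : Tens.VecChain T (Es1 ++ Es2)) :
    Tens.VecChain T Es1 ∧ Tens.VecChain (List.foldl Tens.contr T Es1) Es2 := by
  induction Es1 generalizing T with
  | nil => exact ⟨trivial, hch⟩
  | cons E Es ih =>
      obtain ⟨hc, hch⟩ := hch
      obtain ⟨h1, h2⟩ := ih hch
      exact ⟨⟨hc, h1⟩, h2⟩

theorem Tens.foldl_contr_assoc {A B : Tens R} {Es : List (Tens R)}
    (hv : ∀ E ∈ Es, E.order.length = 1) (hAB : A.Compatible B) (hch : Tens.VecChain B Es)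
    (hlen : Es.length + 1 ≤ B.order.length) :
    List.foldl Tens.contr (A.contr B) Es = A.contr (List.foldl Tens.contr B Es) ∧
      A.Compatible (List.foldl Tens.contr B Es) := by
  induction Es generalizing B with
  | nil => exact ⟨rfl, hAB⟩
  | cons E Es ih =>
      obtain ⟨hBE, hch⟩ := hch
      have hB2 : 2 ≤ B.order.length := by simp at hlen; omega
      have hvE := hv E (by simp)
      have hstep : (A.contr B).contr E = A.contr (B.contr E) :=
        (Tens.contr_assoc_vec hAB hBE hB2 hvE).symm
      have hAB' : A.Compatible (B.contr E) := Tens.compat_contr_right hAB hBE hB2 hvE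
      have hlen' : Es.length + 1 ≤ (B.contr E).order.length := by
        rw [Tens.contr_vec_order hBE hvE, List.length_dropLast]
        simp at hlen; omega
      obtain ⟨ih1, ih2⟩ := ih (fun E hE => hv E (by simp [hE])) hAB' hch hlen'
      constructor
      · rw [List.foldl_cons, hstep, ih1, List.foldl_cons]
      · rw [List.foldl_cons]
        exact ih2

/-- Left-contraction of a vector. -/
def Tens.contrL (T E : Tens R) : Tens R := E.contr T

theorem Tens.vecChainL_length_le {T : Tens R} {Es : List (Tens R)}
    (hv : ∀ E ∈ Es, E.order.length = 1) (hch : Tens.VecChainL T Es) :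
    Es.length ≤ T.order.length := by
  induction Es generalizing T with
  | nil => simp
  | cons E Es ih =>
      obtain ⟨hc, hch⟩ := hch
      have h1 : (E.contr T).order = T.order.tail :=
        Tens.contr_vecL_order hc (hv E (by simp))
      have h2 := ih (fun E hE => hv E (by simp [hE])) hch
      rw [h1, List.length_tail] at h2
      have h4 : 0 < T.order.length := List.length_pos_iff.mpr hc.2.1
      simpa using by omega

theorem Tens.foldl_contrL_order {T : Tens R} {Es : List (Tens R)}
    (hv : ∀ E ∈ Es, E.order.length = 1) (hch : Tens.VecChainL T Es) :
    (List.foldl Tens.contrL T Es).order = T.order.drop Es.length := by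
  induction Es generalizing T with
  | nil => simp
  | cons E Es ih =>
      rw [List.foldl_cons, Tens.contrL, ih (fun E hE => hv E (by simp [hE])) hch.2,
        Tens.contr_vecL_order hch.1 (hv E (by simp)), ← List.drop_one, List.drop_drop,
        List.length_cons]
      rw [Nat.add_comm]

theorem Tens.vecChainL_prefix {p : List ℕ} {l1 l1' : List ℕ} {T T' : Tens R}
    {Es : List (Tens R)} (hv : ∀ E ∈ Es, E.order.length = 1) (hlen : Es.length ≤ p.length)
    (hT : T.order = p ++ l1) (hT' : T'.order = p ++ l1') (hch : Tens.VecChainL T Es) :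
    Tens.VecChainL T' Es := by
  induction Es generalizing p T T' with
  | nil => trivial
  | cons E Es ih =>
      obtain ⟨hc, hch⟩ := hch
      have hpne : p ≠ [] := List.length_pos_iff.mp (by simp at hlen; omega)
      have hcomp : E.Compatible T' := by
        refine ⟨hc.1, by simp [hT', hpne], ?_⟩
        have h22 := hc.2.2
        rw [hT, List.head?_append_of_ne_nil _ hpne] at h22
        rw [hT', List.head?_append_of_ne_nil _ hpne]
        exact h22
      refine ⟨hcomp, ih (fun E hE => hv E (by simp [hE])) (p := p.tail)
        (by rw [List.length_tail]; simp at hlen; omega) ?_ ?_ hch⟩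
      · rw [Tens.contr_vecL_order hc (hv E (by simp)), hT, tail_append_of_ne_nil' hpne]
      · rw [Tens.contr_vecL_order hcomp (hv E (by simp)), hT', tail_append_of_ne_nil' hpne]

theorem Tens.vecChainL_append {T : Tens R} {Es1 Es2 : List (Tens R)}
    (hch : Tens.VecChainL T (Es1 ++ Es2)) :
    Tens.VecChainL T Es1 ∧ Tens.VecChainL (List.foldl Tens.contrL T Es1) Es2 := by
  induction Es1 generalizing T with
  | nil => exact ⟨trivial, hch⟩
  | cons E Es ih =>
      obtain ⟨hc, hch⟩ := hch
      obtain ⟨h1, h2⟩ := ih hch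
      exact ⟨⟨hc, h1⟩, h2⟩

theorem Tens.foldl_contrL_assoc {A B : Tens R} {Es : List (Tens R)}
    (hv : ∀ E ∈ Es, E.order.length = 1) (hAB : A.Compatible B) (hch : Tens.VecChainL A Es)
    (hlen : Es.length + 1 ≤ A.order.length) :
    List.foldl Tens.contrL (A.contr B) Es = (List.foldl Tens.contrL A Es).contr B ∧
      (List.foldl Tens.contrL A Es).Compatible B := by
  induction Es generalizing A with
  | nil => exact ⟨rfl, hAB⟩
  | cons E Es ih =>
      obtain ⟨hEA, hch⟩ := hch
      have hA2 : 2 ≤ A.order.length := by simp at hlen; omega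
      have hvE := hv E (by simp)
      have hstep : Tens.contrL (A.contr B) E = (E.contr A).contr B :=
        (Tens.contr_assoc_vecL hEA hAB hA2 hvE).symm
      have hAB' : (E.contr A).Compatible B := Tens.compat_contrL_left hEA hAB hA2 hvE
      have hlen' : Es.length + 1 ≤ (E.contr A).order.length := by
        rw [Tens.contr_vecL_order hEA hvE, List.length_tail]
        simp at hlen; omega
      obtain ⟨ih1, ih2⟩ := ih (fun E hE => hv E (by simp [hE])) hAB' hch hlen'
      constructor
      · rw [List.foldl_cons, hstep, ih1, List.foldl_cons]
        rfl
      · rw [List.foldl_cons]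
        exact ih2

end TC
namespace TC

variable {K : Type} [Field K]

theorem SForm.dim_le_maxdim (F : SForm K) : F.eval.dim ≤ F.maxdim := by
  cases F with
  | input T => exact le_refl _
  | contr F G => exact le_max_left _ _

theorem SForm.TotallyTame.tame {F : SForm K} (h : F.TotallyTame) : F.Tame := by
  cases F with
  | input T => exact h
  | contr F G => exact h.1

theorem SForm.eval_foldl (F : SForm K) (Es : List (SForm K)) :
    (List.foldl SForm.contr F Es).eval = List.foldl Tens.contr F.eval (Es.map SForm.eval) := by
  induction Es generalizing F with
  | nil => rfl
  | cons E Es ih => exact ih (F.contr E)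

theorem SForm.size_foldl (F : SForm K) (Es : List (SForm K)) :
    (List.foldl SForm.contr F Es).size = F.size + (Es.map SForm.size).sum + Es.length := by
  induction Es generalizing F with
  | nil => simp
  | cons E Es ih =>
      rw [List.foldl_cons, ih]
      show (F.size + E.size + 1) + _ + _ = _
      simp
      omega

theorem SForm.le_inputDim_foldl (F : SForm K) (Es : List (SForm K)) :
    F.inputDim ≤ (List.foldl SForm.contr F Es).inputDim := by
  induction Es generalizing F with
  | nil => exact le_refl _
  | cons E Es ih =>
      refine le_trans ?_ (ih (F.contr E))
      exact le_max_left _ _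

theorem SForm.mem_le_inputDim_foldl (F : SForm K) (Es : List (SForm K)) :
    ∀ E ∈ Es, E.inputDim ≤ (List.foldl SForm.contr F Es).inputDim := by
  induction Es generalizing F with
  | nil => simp
  | cons E' Es ih =>
      intro E hE
      rcases List.mem_cons.mp hE with h | h
      · subst h
        refine le_trans ?_ (SForm.le_inputDim_foldl (F.contr E) Es)
        exact le_max_right _ _
      · exact ih (F.contr E') E h

theorem SForm.wf_foldl {F : SForm K} {Es : List (SForm K)} (hF : F.WF)
    (hEs : ∀ E ∈ Es, E.WF) (hch : Tens.VecChain F.eval (Es.map SForm.eval)) :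
    (List.foldl SForm.contr F Es).WF := by
  induction Es generalizing F with
  | nil => exact hF
  | cons E Es ih =>
      exact ih ⟨hF, hEs E (by simp), hch.1⟩ (fun E hE => hEs E (by simp [hE])) hch.2

theorem SForm.foldl_tame {F : SForm K} {Es : List (SForm K)} (hT : F.TotallyTame)
    (hMI : F.maxdim ≤ F.inputDim)
    (hEs : ∀ E ∈ Es, E.WF ∧ E.TotallyTame ∧ E.eval.order.length = 1)
    (hch : Tens.VecChain F.eval (Es.map SForm.eval)) :
    (List.foldl SForm.contr F Es).TotallyTame ∧
      (List.foldl SForm.contr F Es).maxdim ≤ (List.foldl SForm.contr F Es).inputDim := by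
  induction Es generalizing F with
  | nil => exact ⟨hT, hMI⟩
  | cons E Es ih =>
      obtain ⟨hEW, hET, hEdim⟩ := hEs E (by simp)
      obtain ⟨hc, hch'⟩ := hch
      have hFdim1 : 1 ≤ F.eval.order.length := List.length_pos_iff.mpr hc.1
      have hdim : (F.eval.contr E.eval).dim = F.eval.order.length - 1 := by
        show (F.eval.contr E.eval).order.length = _
        rw [Tens.contr_vec_order hc hEdim, List.length_dropLast]
      have hdimle : F.eval.dim ≤ F.maxdim := SForm.dim_le_maxdim F
      have hdF : F.eval.dim = F.eval.order.length := rfl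
      have hEtame : E.maxdim ≤ max E.dim E.inputDim := hET.tame
      have hEd1 : E.dim = 1 := hEdim
      have hmax : (SForm.contr F E).maxdim ≤ (SForm.contr F E).inputDim := by
        show max ((F.eval.contr E.eval).dim) (max F.maxdim E.maxdim) ≤
          max F.inputDim E.inputDim
        rw [hEd1] at hEtame
        omega
      have hTT : (SForm.contr F E).TotallyTame :=
        ⟨le_trans hmax (le_max_right _ _), hT, hET⟩
      exact ih hTT hmax (fun E hE => hEs E (by simp [hE])) hch'

/-- Left attachment at the formula level. -/
def SForm.contrL (F E : SForm K) : SForm K := SForm.contr E F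

theorem SForm.eval_foldlL (F : SForm K) (Es : List (SForm K)) :
    (List.foldl SForm.contrL F Es).eval = List.foldl Tens.contrL F.eval (Es.map SForm.eval) := by
  induction Es generalizing F with
  | nil => rfl
  | cons E Es ih => exact ih (F.contrL E)

theorem SForm.size_foldlL (F : SForm K) (Es : List (SForm K)) :
    (List.foldl SForm.contrL F Es).size = F.size + (Es.map SForm.size).sum + Es.length := by
  induction Es generalizing F with
  | nil => simp
  | cons E Es ih =>
      rw [List.foldl_cons, ih]
      show (E.size + F.size + 1) + _ + _ = _
      simp
      omega

theorem SForm.le_inputDim_foldlL (F : SForm K) (Es : List (SForm K)) :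
    F.inputDim ≤ (List.foldl SForm.contrL F Es).inputDim := by
  induction Es generalizing F with
  | nil => exact le_refl _
  | cons E Es ih =>
      refine le_trans ?_ (ih (F.contrL E))
      exact le_max_right _ _

theorem SForm.mem_le_inputDim_foldlL (F : SForm K) (Es : List (SForm K)) :
    ∀ E ∈ Es, E.inputDim ≤ (List.foldl SForm.contrL F Es).inputDim := by
  induction Es generalizing F with
  | nil => simp
  | cons E' Es ih =>
      intro E hE
      rcases List.mem_cons.mp hE with h | h
      · subst h
        refine le_trans ?_ (SForm.le_inputDim_foldlL (F.contrL E) Es)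
        exact le_max_left _ _
      · exact ih (F.contrL E') E h

theorem SForm.wf_foldlL {F : SForm K} {Es : List (SForm K)} (hF : F.WF)
    (hEs : ∀ E ∈ Es, E.WF) (hch : Tens.VecChainL F.eval (Es.map SForm.eval)) :
    (List.foldl SForm.contrL F Es).WF := by
  induction Es generalizing F with
  | nil => exact hF
  | cons E Es ih =>
      exact ih ⟨hEs E (by simp), hF, hch.1⟩ (fun E hE => hEs E (by simp [hE])) hch.2

theorem SForm.foldl_tameL {F : SForm K} {Es : List (SForm K)} (hT : F.TotallyTame)
    (hMI : F.maxdim ≤ F.inputDim)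
    (hEs : ∀ E ∈ Es, E.WF ∧ E.TotallyTame ∧ E.eval.order.length = 1)
    (hch : Tens.VecChainL F.eval (Es.map SForm.eval)) :
    (List.foldl SForm.contrL F Es).TotallyTame ∧
      (List.foldl SForm.contrL F Es).maxdim ≤ (List.foldl SForm.contrL F Es).inputDim := by
  induction Es generalizing F with
  | nil => exact ⟨hT, hMI⟩
  | cons E Es ih =>
      obtain ⟨hEW, hET, hEdim⟩ := hEs E (by simp)
      obtain ⟨hc, hch'⟩ := hch
      have hFdim1 : 1 ≤ F.eval.order.length := List.length_pos_iff.mpr hc.2.1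
      have hdim : (E.eval.contr F.eval).dim = F.eval.order.length - 1 := by
        show (E.eval.contr F.eval).order.length = _
        rw [Tens.contr_vecL_order hc hEdim, List.length_tail]
      have hdimle : F.eval.dim ≤ F.maxdim := SForm.dim_le_maxdim F
      have hdF : F.eval.dim = F.eval.order.length := rfl
      have hEtame : E.maxdim ≤ max E.dim E.inputDim := hET.tame
      have hEd1 : E.dim = 1 := hEdim
      have hmax : (SForm.contrL F E).maxdim ≤ (SForm.contrL F E).inputDim := by
        show max ((E.eval.contr F.eval).dim) (max E.maxdim F.maxdim) ≤
          max E.inputDim F.inputDim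
        rw [hEd1] at hEtame
        omega
      have hTT : (SForm.contrL F E).TotallyTame :=
        ⟨le_trans hmax (le_max_right _ _), hET, hT⟩
      exact ih hTT hmax (fun E hE => hEs E (by simp [hE])) hch'

end TC
namespace TC

theorem arith_attach (A B m M1 M2 MG p1 p2 q : ℕ)
    (h1 : M1 ≤ max A p1) (h2 : MG ≤ max (B - m) q)
    (h3 : max ((A-1)+(B-1)) (max M1 M2) ≤ max ((A-1)+(B-1)) (max p1 p2))
    (h4 : B ≤ M2) (h5 : p2 ≤ q) (ha : 1 ≤ A) (hb : 2 ≤ B) (hm : m + 2 ≤ B) :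
    max ((A-1)+(B-m-1)) (max M1 MG) ≤ max ((A-1)+(B-m-1)) (max p1 q) := by omega

variable {K : Type} [Field K]

theorem SForm.attachVecsR (F : SForm K) : ∀ (Es : List (SForm K)), Es ≠ [] → F.WF →
    F.TotallyTame →
    (∀ E ∈ Es, E.WF ∧ E.TotallyTame ∧ E.eval.order.length = 1) →
    Tens.VecChain F.eval (Es.map SForm.eval) →
    ∃ G : SForm K, G.WF ∧ G.TotallyTame ∧
      G.size = F.size + (Es.map SForm.size).sum + Es.length ∧
      G.eval = List.foldl Tens.contr F.eval (Es.map SForm.eval) ∧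
      F.inputDim ≤ G.inputDim ∧ ∀ E ∈ Es, E.inputDim ≤ G.inputDim := by
  induction F with
  | input T =>
      intro Es _ hW hT hEs hch
      refine ⟨List.foldl SForm.contr (.input T) Es, ?_, ?_, ?_, ?_, ?_, ?_⟩
      · exact SForm.wf_foldl hW (fun E hE => (hEs E hE).1) hch
      · exact (SForm.foldl_tame hT (le_refl _) hEs hch).1
      · exact SForm.size_foldl _ Es
      · exact SForm.eval_foldl _ Es
      · exact SForm.le_inputDim_foldl _ Es
      · exact SForm.mem_le_inputDim_foldl _ Es
  | contr F1 F2 ih1 ih2 =>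
      intro Es hne hW hT hEs hch
      obtain ⟨hW1, hW2, hc12⟩ := hW
      obtain ⟨htame, hT1, hT2⟩ := hT
      obtain ⟨c, hlast1, hhead2⟩ := hc12.exists_c
      have hvEs : ∀ T' ∈ Es.map SForm.eval, T'.order.length = 1 := by
        intro T' hT'
        obtain ⟨E, hE, rfl⟩ := List.mem_map.mp hT'
        exact (hEs E hE).2.2
      have ha1 : 1 ≤ F1.eval.order.length := List.length_pos_iff.mpr hc12.1
      have hb1' : 1 ≤ F2.eval.order.length := List.length_pos_iff.mpr hc12.2.1
      have horder : (SForm.contr F1 F2).eval.order =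
          F1.eval.order.dropLast ++ F2.eval.order.tail := Tens.contr_order hc12
      have hmlen : Es.length ≤
          (F1.eval.order.length - 1) + (F2.eval.order.length - 1) := by
        have := Tens.vecChain_length_le hvEs hch
        rw [horder] at this
        simpa using this
      have hF2 : F2.eval.order = [c] ++ F2.eval.order.tail := hhead2
      have htlen : F2.eval.order.tail.length = F2.eval.order.length - 1 :=
        List.length_tail
      by_cases hb1 : F2.eval.order.length = 1
      · -- F2 is already a vector: recurse on F1 with F2 :: Es
        have hch' : Tens.VecChain F1.eval ((F2 :: Es).map SForm.eval) := ⟨hc12, hch⟩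
        obtain ⟨G, g1, g2, g3, g4, g5, g6⟩ := ih1 (F2 :: Es) (by simp) hW1 hT1
          (by
            intro E hE
            rcases List.mem_cons.mp hE with h | h
            · subst h; exact ⟨hW2, hT2, hb1⟩
            · exact hEs E h)
          hch'
        refine ⟨G, g1, g2, ?_, g4, ?_, ?_⟩
        · rw [g3]
          show _ = F1.size + F2.size + 1 + _ + _
          simp
          omega
        · have h5 := g6 F2 (by simp)
          show max F1.inputDim F2.inputDim ≤ G.inputDim
          omega
        · intro E hE
          exact g6 E (by simp [hE])
      · -- F2 has dimension at least 2
        have hb2 : 2 ≤ F2.eval.order.length := by omega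
        by_cases hcase : Es.length ≤ F2.eval.order.length - 2
        · -- all vectors go into F2
          have hchF2 : Tens.VecChain F2.eval (Es.map SForm.eval) :=
            Tens.vecChain_suffix hvEs (by simp; omega) horder hF2 hch
          obtain ⟨G2, g1, g2, g3, g4, g5, g6⟩ := ih2 Es hne hW2 hT2 hEs hchF2
          have hG2ord : G2.eval.order =
              [c] ++ List.dropLast^[Es.length] F2.eval.order.tail := by
            rw [g4, Tens.foldl_contr_order hvEs hchF2]
            conv_lhs => rw [hF2]
            rw [dropLast_iter_append (by simp; omega)]
            simp
          have hG2len : G2.eval.order.length = F2.eval.order.length - Es.length := by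
            rw [hG2ord]
            simp [dropLast_iter_length]
            omega
          have hc1G2 : F1.eval.Compatible G2.eval := by
            refine ⟨hc12.1, ?_, ?_⟩
            · rw [hG2ord]; simp
            · rw [hG2ord, List.head?_append_of_ne_nil _ (by simp), hlast1]; rfl
          have heval : F1.eval.contr G2.eval =
              List.foldl Tens.contr (F1.eval.contr F2.eval) (Es.map SForm.eval) := by
            rw [g4]
            exact (Tens.foldl_contr_assoc hvEs hc12 hchF2 (by simp; omega)).1.symm
          -- dimension bookkeeping for tameness
          have hrootdim : (F1.eval.contr G2.eval).dim =
              (F1.eval.order.length - 1) + (F2.eval.order.length - Es.length - 1) := by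
            show (F1.eval.contr G2.eval).order.length = _
            rw [Tens.contr_order hc1G2]
            simp [hG2len]
          have hFdim : (SForm.contr F1 F2).eval.dim =
              (F1.eval.order.length - 1) + (F2.eval.order.length - 1) := by
            show (SForm.contr F1 F2).eval.order.length = _
            rw [horder]
            simp [htlen]
          have htame1 : F1.maxdim ≤ max F1.eval.order.length F1.inputDim := hT1.tame
          have htameG2 : G2.maxdim ≤
              max (F2.eval.order.length - Es.length) G2.inputDim := by
            have h : G2.maxdim ≤ max G2.eval.order.length G2.inputDim := g2.tame
            rw [hG2len] at h
            exact h
          have hd2le : F2.eval.order.length ≤ F2.maxdim := SForm.dim_le_maxdim F2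
          have htameF : max ((F1.eval.order.length - 1) + (F2.eval.order.length - 1))
              (max F1.maxdim F2.maxdim) ≤
              max ((F1.eval.order.length - 1) + (F2.eval.order.length - 1))
              (max F1.inputDim F2.inputDim) := by
            have h : max ((F1.eval.contr F2.eval).dim) (max F1.maxdim F2.maxdim) ≤
                max ((F1.eval.contr F2.eval).dim) (max F1.inputDim F2.inputDim) := htame
            have hdd : (F1.eval.contr F2.eval).dim =
                (F1.eval.order.length - 1) + (F2.eval.order.length - 1) := hFdim
            rw [hdd] at h
            exact h
          have hGtame : (SForm.contr F1 G2).Tame := by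
            show max ((F1.eval.contr G2.eval).dim) (max F1.maxdim G2.maxdim) ≤
              max ((F1.eval.contr G2.eval).dim) (max F1.inputDim G2.inputDim)
            rw [hrootdim]
            exact arith_attach F1.eval.order.length F2.eval.order.length Es.length
              F1.maxdim F2.maxdim G2.maxdim F1.inputDim F2.inputDim G2.inputDim
              htame1 htameG2 htameF hd2le g5 ha1 hb2 (by omega)
          refine ⟨SForm.contr F1 G2, ⟨hW1, g1, hc1G2⟩, ⟨hGtame, hT1, g2⟩, ?_, heval, ?_, ?_⟩
          · show F1.size + G2.size + 1 = F1.size + F2.size + 1 + _ + _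
            rw [g3]
            omega
          · show max F1.inputDim F2.inputDim ≤ max F1.inputDim G2.inputDim
            omega
          · intro E hE
            have := g6 E hE
            show _ ≤ max F1.inputDim G2.inputDim
            omega
        · -- split the vectors between F2 and F1
          have hm2 : F2.eval.order.length - 1 ≤ Es.length := by omega
          set m2 : ℕ := F2.eval.order.length - 1 with hm2def
          have hsplit : Es = Es.take m2 ++ Es.drop m2 := (List.take_append_drop m2 Es).symm
          have hlen2 : (Es.take m2).length = m2 := by
            rw [List.length_take]; omega
          have hch2 : Tens.VecChain (SForm.contr F1 F2).eval
              ((Es.take m2).map SForm.eval) ∧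
              Tens.VecChain (List.foldl Tens.contr (SForm.contr F1 F2).eval
                ((Es.take m2).map SForm.eval)) ((Es.drop m2).map SForm.eval) := by
            apply Tens.vecChain_append
            rw [← List.map_append, ← hsplit]
            exact hch
          have hvEs2 : ∀ T' ∈ (Es.take m2).map SForm.eval, T'.order.length = 1 := by
            intro T' hT'
            obtain ⟨E, hE, rfl⟩ := List.mem_map.mp hT'
            exact (hEs E (List.take_subset _ _ hE)).2.2
          have hvEs1 : ∀ T' ∈ (Es.drop m2).map SForm.eval, T'.order.length = 1 := by
            intro T' hT'
            obtain ⟨E, hE, rfl⟩ := List.mem_map.mp hT'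
            exact (hEs E (List.drop_subset _ _ hE)).2.2
          have hchF2 : Tens.VecChain F2.eval ((Es.take m2).map SForm.eval) :=
            Tens.vecChain_suffix hvEs2 (by simp [hlen2] <;> omega) horder hF2 hch2.1
          obtain ⟨V, v1, v2, v3, v4, v5, v6⟩ := ih2 (Es.take m2)
            (by
              intro h
              rw [h] at hlen2
              simp at hlen2
              omega)
            hW2 hT2 (fun E hE => hEs E (List.take_subset _ _ hE)) hchF2
          have hVord : V.eval.order = [c] := by
            rw [v4, Tens.foldl_contr_order hvEs2 hchF2]
            conv_lhs => rw [hF2]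
            rw [List.length_map, hlen2, dropLast_iter_append (by omega),
              show m2 = F2.eval.order.tail.length by omega, dropLast_iter_self,
              List.append_nil]
          have hfa := Tens.foldl_contr_assoc hvEs2 hc12 hchF2 (by simp [hlen2] <;> omega)
          have hc1V : F1.eval.Compatible V.eval := by
            rw [v4]
            exact hfa.2
          have hFV : F1.eval.contr V.eval =
              List.foldl Tens.contr (SForm.contr F1 F2).eval
                ((Es.take m2).map SForm.eval) := by
            rw [v4]
            exact hfa.1.symm
          have hch1 : Tens.VecChain F1.eval ((V :: Es.drop m2).map SForm.eval) := by
            refine ⟨hc1V, ?_⟩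
            show Tens.VecChain (F1.eval.contr V.eval) ((Es.drop m2).map SForm.eval)
            rw [hFV]
            exact hch2.2
          obtain ⟨G, g1, g2, g3, g4, g5, g6⟩ := ih1 (V :: Es.drop m2) (by simp) hW1 hT1
            (by
              intro E hE
              rcases List.mem_cons.mp hE with h | h
              · subst h
                exact ⟨v1, v2, by rw [hVord]; rfl⟩
              · exact hEs E (List.drop_subset _ _ h))
            hch1
          have hsum : (Es.map SForm.size).sum =
              ((Es.take m2).map SForm.size).sum + ((Es.drop m2).map SForm.size).sum := by
            conv_lhs => rw [hsplit]
            rw [List.map_append, List.sum_append]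
          have hlensum : Es.length = m2 + (Es.drop m2).length := by
            conv_lhs => rw [hsplit]
            rw [List.length_append, hlen2]
          refine ⟨G, g1, g2, ?_, ?_, ?_, ?_⟩
          · rw [g3, List.map_cons, List.sum_cons, List.length_cons, v3, hlen2]
            show _ = F1.size + F2.size + 1 + _ + _
            rw [hsum, hlensum]
            omega
          · rw [g4]
            show List.foldl Tens.contr F1.eval (V.eval :: (Es.drop m2).map SForm.eval) = _
            rw [List.foldl_cons, hFV, ← List.foldl_append, ← List.map_append, ← hsplit]
          · have h5 := g6 V (by simp)
            show max F1.inputDim F2.inputDim ≤ G.inputDim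
            omega
          · intro E hE
            conv at hE => rw [hsplit]
            rcases List.mem_append.mp hE with h | h
            · have := v6 E h
              have h5 := g6 V (by simp)
              omega
            · exact g6 E (by simp [h])

end TC
namespace TC

theorem arith_attachL (A B m M1 M2 MG p1 p2 q : ℕ)
    (h1 : M2 ≤ max B p2) (h2 : MG ≤ max (A - m) q)
    (h3 : max ((A-1)+(B-1)) (max M1 M2) ≤ max ((A-1)+(B-1)) (max p1 p2))
    (h4 : A ≤ M1) (h5 : p1 ≤ q) (hb : 1 ≤ B) (ha : 2 ≤ A) (hm : m + 2 ≤ A) :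
    max ((A-m-1)+(B-1)) (max MG M2) ≤ max ((A-m-1)+(B-1)) (max q p2) := by omega

variable {K : Type} [Field K]

theorem SForm.attachVecsL (F : SForm K) : ∀ (Es : List (SForm K)), Es ≠ [] → F.WF →
    F.TotallyTame →
    (∀ E ∈ Es, E.WF ∧ E.TotallyTame ∧ E.eval.order.length = 1) →
    Tens.VecChainL F.eval (Es.map SForm.eval) →
    ∃ G : SForm K, G.WF ∧ G.TotallyTame ∧
      G.size = F.size + (Es.map SForm.size).sum + Es.length ∧
      G.eval = List.foldl Tens.contrL F.eval (Es.map SForm.eval) ∧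
      F.inputDim ≤ G.inputDim ∧ ∀ E ∈ Es, E.inputDim ≤ G.inputDim := by
  induction F with
  | input T =>
      intro Es _ hW hT hEs hch
      refine ⟨List.foldl SForm.contrL (.input T) Es, ?_, ?_, ?_, ?_, ?_, ?_⟩
      · exact SForm.wf_foldlL hW (fun E hE => (hEs E hE).1) hch
      · exact (SForm.foldl_tameL hT (le_refl _) hEs hch).1
      · exact SForm.size_foldlL _ Es
      · exact SForm.eval_foldlL _ Es
      · exact SForm.le_inputDim_foldlL _ Es
      · exact SForm.mem_le_inputDim_foldlL _ Es
  | contr F1 F2 ih1 ih2 =>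
      intro Es hne hW hT hEs hch
      obtain ⟨hW1, hW2, hc12⟩ := hW
      obtain ⟨htame, hT1, hT2⟩ := hT
      obtain ⟨c, hlast1, hhead2⟩ := hc12.exists_c
      have hvEs : ∀ T' ∈ Es.map SForm.eval, T'.order.length = 1 := by
        intro T' hT'
        obtain ⟨E, hE, rfl⟩ := List.mem_map.mp hT'
        exact (hEs E hE).2.2
      have ha1 : 1 ≤ F1.eval.order.length := List.length_pos_iff.mpr hc12.1
      have hb1' : 1 ≤ F2.eval.order.length := List.length_pos_iff.mpr hc12.2.1
      have horder : (SForm.contr F1 F2).eval.order =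
          F1.eval.order.dropLast ++ F2.eval.order.tail := Tens.contr_order hc12
      have hmlen : Es.length ≤
          (F1.eval.order.length - 1) + (F2.eval.order.length - 1) := by
        have := Tens.vecChainL_length_le hvEs hch
        rw [horder] at this
        simpa using this
      have hF1 : F1.eval.order = F1.eval.order.dropLast ++ [c] :=
        (order_dropLast_concat hlast1).symm
      have hdlen : F1.eval.order.dropLast.length = F1.eval.order.length - 1 :=
        List.length_dropLast
      by_cases ha1' : F1.eval.order.length = 1
      · -- F1 is already a vector: recurse on F2 with F1 :: Es
        have hch' : Tens.VecChainL F2.eval ((F1 :: Es).map SForm.eval) := ⟨hc12, hch⟩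
        obtain ⟨G, g1, g2, g3, g4, g5, g6⟩ := ih2 (F1 :: Es) (by simp) hW2 hT2
          (by
            intro E hE
            rcases List.mem_cons.mp hE with h | h
            · subst h; exact ⟨hW1, hT1, ha1'⟩
            · exact hEs E h)
          hch'
        refine ⟨G, g1, g2, ?_, g4, ?_, ?_⟩
        · rw [g3]
          show _ = F1.size + F2.size + 1 + _ + _
          simp
          omega
        · have h5 := g6 F1 (by simp)
          show max F1.inputDim F2.inputDim ≤ G.inputDim
          omega
        · intro E hE
          exact g6 E (by simp [hE])
      · -- F1 has dimension at least 2
        have ha2 : 2 ≤ F1.eval.order.length := by omega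
        by_cases hcase : Es.length ≤ F1.eval.order.length - 2
        · -- all vectors go into F1
          have hchF1 : Tens.VecChainL F1.eval (Es.map SForm.eval) :=
            Tens.vecChainL_prefix hvEs (by simp [hdlen]; omega) horder hF1 hch
          obtain ⟨G1, g1, g2, g3, g4, g5, g6⟩ := ih1 Es hne hW1 hT1 hEs hchF1
          have hG1ord : G1.eval.order =
              (F1.eval.order.dropLast.drop Es.length) ++ [c] := by
            rw [g4, Tens.foldl_contrL_order hvEs hchF1]
            conv_lhs => rw [hF1]
            rw [List.length_map, List.drop_append_of_le_length (by omega)]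
          have hG1len : G1.eval.order.length = F1.eval.order.length - Es.length := by
            rw [hG1ord]
            simp [hdlen]
            omega
          have hcG1F2 : G1.eval.Compatible F2.eval := by
            refine ⟨?_, hc12.2.1, ?_⟩
            · rw [hG1ord]; simp
            · rw [hG1ord, List.getLast?_append_of_ne_nil _ (by simp), hhead2]; rfl
          have heval : G1.eval.contr F2.eval =
              List.foldl Tens.contrL (F1.eval.contr F2.eval) (Es.map SForm.eval) := by
            rw [g4]
            exact (Tens.foldl_contrL_assoc hvEs hc12 hchF1 (by simp; omega)).1.symm
          have hrootdim : (G1.eval.contr F2.eval).dim =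
              (F1.eval.order.length - Es.length - 1) + (F2.eval.order.length - 1) := by
            show (G1.eval.contr F2.eval).order.length = _
            rw [Tens.contr_order hcG1F2]
            simp [hG1len]
          have hFdim : (SForm.contr F1 F2).eval.dim =
              (F1.eval.order.length - 1) + (F2.eval.order.length - 1) := by
            show (SForm.contr F1 F2).eval.order.length = _
            rw [horder]
            simp [hdlen]
          have htame2 : F2.maxdim ≤ max F2.eval.order.length F2.inputDim := hT2.tame
          have htameG1 : G1.maxdim ≤
              max (F1.eval.order.length - Es.length) G1.inputDim := by
            have h : G1.maxdim ≤ max G1.eval.order.length G1.inputDim := g2.tame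
            rw [hG1len] at h
            exact h
          have hd1le : F1.eval.order.length ≤ F1.maxdim := SForm.dim_le_maxdim F1
          have htameF : max ((F1.eval.order.length - 1) + (F2.eval.order.length - 1))
              (max F1.maxdim F2.maxdim) ≤
              max ((F1.eval.order.length - 1) + (F2.eval.order.length - 1))
              (max F1.inputDim F2.inputDim) := by
            have h : max ((F1.eval.contr F2.eval).dim) (max F1.maxdim F2.maxdim) ≤
                max ((F1.eval.contr F2.eval).dim) (max F1.inputDim F2.inputDim) := htame
            have hdd : (F1.eval.contr F2.eval).dim =
                (F1.eval.order.length - 1) + (F2.eval.order.length - 1) := hFdim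
            rw [hdd] at h
            exact h
          have hGtame : (SForm.contr G1 F2).Tame := by
            show max ((G1.eval.contr F2.eval).dim) (max G1.maxdim F2.maxdim) ≤
              max ((G1.eval.contr F2.eval).dim) (max G1.inputDim F2.inputDim)
            rw [hrootdim]
            exact arith_attachL F1.eval.order.length F2.eval.order.length Es.length
              F1.maxdim F2.maxdim G1.maxdim F1.inputDim F2.inputDim G1.inputDim
              htame2 htameG1 htameF hd1le g5 hb1' ha2 (by omega)
          refine ⟨SForm.contr G1 F2, ⟨g1, hW2, hcG1F2⟩, ⟨hGtame, g2, hT2⟩, ?_, heval, ?_, ?_⟩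
          · show G1.size + F2.size + 1 = F1.size + F2.size + 1 + _ + _
            rw [g3]
            omega
          · show max F1.inputDim F2.inputDim ≤ max G1.inputDim F2.inputDim
            omega
          · intro E hE
            have := g6 E hE
            show _ ≤ max G1.inputDim F2.inputDim
            omega
        · -- split the vectors between F1 and F2
          have hm2 : F1.eval.order.length - 1 ≤ Es.length := by omega
          set m2 : ℕ := F1.eval.order.length - 1 with hm2def
          have hsplit : Es = Es.take m2 ++ Es.drop m2 := (List.take_append_drop m2 Es).symm
          have hlen2 : (Es.take m2).length = m2 := by
            rw [List.length_take]; omega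
          have hch2 : Tens.VecChainL (SForm.contr F1 F2).eval
              ((Es.take m2).map SForm.eval) ∧
              Tens.VecChainL (List.foldl Tens.contrL (SForm.contr F1 F2).eval
                ((Es.take m2).map SForm.eval)) ((Es.drop m2).map SForm.eval) := by
            apply Tens.vecChainL_append
            rw [← List.map_append, ← hsplit]
            exact hch
          have hvEs2 : ∀ T' ∈ (Es.take m2).map SForm.eval, T'.order.length = 1 := by
            intro T' hT'
            obtain ⟨E, hE, rfl⟩ := List.mem_map.mp hT'
            exact (hEs E (List.take_subset _ _ hE)).2.2
          have hchF1 : Tens.VecChainL F1.eval ((Es.take m2).map SForm.eval) :=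
            Tens.vecChainL_prefix hvEs2 (by simp [hlen2, hdlen] <;> omega) horder hF1 hch2.1
          obtain ⟨V, v1, v2, v3, v4, v5, v6⟩ := ih1 (Es.take m2)
            (by
              intro h
              rw [h] at hlen2
              simp at hlen2
              omega)
            hW1 hT1 (fun E hE => hEs E (List.take_subset _ _ hE)) hchF1
          have hVord : V.eval.order = [c] := by
            rw [v4, Tens.foldl_contrL_order hvEs2 hchF1]
            conv_lhs => rw [hF1]
            rw [List.length_map, hlen2,
              show m2 = F1.eval.order.dropLast.length by omega, List.drop_left]
          have hfa := Tens.foldl_contrL_assoc hvEs2 hc12 hchF1 (by simp [hlen2] <;> omega)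
          have hcVF2 : V.eval.Compatible F2.eval := by
            rw [v4]
            exact hfa.2
          have hVF : V.eval.contr F2.eval =
              List.foldl Tens.contrL (SForm.contr F1 F2).eval
                ((Es.take m2).map SForm.eval) := by
            rw [v4]
            exact hfa.1.symm
          have hch1 : Tens.VecChainL F2.eval ((V :: Es.drop m2).map SForm.eval) := by
            refine ⟨hcVF2, ?_⟩
            show Tens.VecChainL (V.eval.contr F2.eval) ((Es.drop m2).map SForm.eval)
            rw [hVF]
            exact hch2.2
          obtain ⟨G, g1, g2, g3, g4, g5, g6⟩ := ih2 (V :: Es.drop m2) (by simp) hW2 hT2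
            (by
              intro E hE
              rcases List.mem_cons.mp hE with h | h
              · subst h
                exact ⟨v1, v2, by rw [hVord]; rfl⟩
              · exact hEs E (List.drop_subset _ _ h))
            hch1
          have hsum : (Es.map SForm.size).sum =
              ((Es.take m2).map SForm.size).sum + ((Es.drop m2).map SForm.size).sum := by
            conv_lhs => rw [hsplit]
            rw [List.map_append, List.sum_append]
          have hlensum : Es.length = m2 + (Es.drop m2).length := by
            conv_lhs => rw [hsplit]
            rw [List.length_append, hlen2]
          refine ⟨G, g1, g2, ?_, ?_, ?_, ?_⟩
          · rw [g3, List.map_cons, List.sum_cons, List.length_cons, v3, hlen2]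
            show _ = F1.size + F2.size + 1 + _ + _
            rw [hsum, hlensum]
            omega
          · rw [g4]
            show List.foldl Tens.contrL F2.eval (V.eval :: (Es.drop m2).map SForm.eval) = _
            rw [List.foldl_cons]
            show List.foldl Tens.contrL (V.eval.contr F2.eval) _ = _
            rw [hVF, ← List.foldl_append, ← List.map_append, ← hsplit]
          · have h5 := g6 V (by simp)
            show max F1.inputDim F2.inputDim ≤ G.inputDim
            omega
          · intro E hE
            conv at hE => rw [hsplit]
            rcases List.mem_append.mp hE with h | h
            · have := v6 E h
              have h5 := g6 V (by simp)
              omega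
            · exact g6 E (by simp [h])

end TC
open TC

/-- contracting a totally tame formula with a totally tame vector of
input dimension at most `p` on either side can be done by a totally tame formula
of size `|F| + |E| + 1`. -/
theorem totally_tame_contract_vector {K : Type} [Field K] (F E : SForm K)
    (hFwf : F.WF) (hEwf : E.WF) (hFt : F.TotallyTame) (hEt : E.TotallyTame)
    (hEdim : E.dim = 1) (hEp : E.inputDim ≤ F.inputDim) :
    (F.eval.Compatible E.eval →
      ∃ Gr : SForm K, Gr.WF ∧ Gr.TotallyTame ∧ Gr.size = F.size + E.size + 1 ∧
        Gr.eval = F.eval.contr E.eval) ∧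
    (E.eval.Compatible F.eval →
      ∃ Gl : SForm K, Gl.WF ∧ Gl.TotallyTame ∧ Gl.size = F.size + E.size + 1 ∧
        Gl.eval = E.eval.contr F.eval) := by
  have hE1 : E.eval.order.length = 1 := hEdim
  constructor
  · intro hcomp
    obtain ⟨G, g1, g2, g3, g4, g5, g6⟩ := TC.SForm.attachVecsR F [E] (by simp) hFwf hFt
      (by
        intro E' hE'
        rw [List.mem_singleton] at hE'
        subst hE'
        exact ⟨hEwf, hEt, hE1⟩)
      ⟨hcomp, trivial⟩
    refine ⟨G, g1, g2, ?_, ?_⟩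
    · rw [g3]
      simp
    · rw [g4]
      rfl
  · intro hcomp
    obtain ⟨G, g1, g2, g3, g4, g5, g6⟩ := TC.SForm.attachVecsL F [E] (by simp) hFwf hFt
      (by
        intro E' hE'
        rw [List.mem_singleton] at hE'
        subst hE'
        exact ⟨hEwf, hEt, hE1⟩)
      ⟨hcomp, trivial⟩
    refine ⟨G, g1, g2, ?_, ?_⟩
    · rw [g3]
      simp
    · rw [g4]
      rfl
end
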